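/- arXiv:2411.19272 — 6 statements merged into one kernel-verified Lean document; each statement's English description precedes it below -/
import Mathlib

section
/- Let g: X → ℝ ∪ {+∞} be a lower semicontinuous, proper, convex function, h: X → ℝ ∪ {+∞} a proper generalized polyhedral convex function, and C ⊆ X a nonempty closed convex set with C ⊆ dom g and C ⊆ int(dom h). If the restriction of g to each line segment contained in C is continuous, then every connected component of the local solution set S₁ of the problem: minimize f(x) = g(x) − h(x) subject to x ∈ C, is a union of finitely many convex sets, and f is constant on each connected component of S₁. -/
open Pointwise Topology

/-- A generalized polyhedral convex set: the intersection of a closed affine subspace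
with finitely many closed half-spaces given by continuous linear functionals. -/
def IsGPCS (X : Type*) [AddCommGroup X] [Module ℝ X] [TopologicalSpace X] (S : Set X) : Prop :=
  ∃ (L : AffineSubspace ℝ X) (p : ℕ) (a : Fin p → (X →L[ℝ] ℝ)) (c : Fin p → ℝ),
    IsClosed (L : Set X) ∧ S = {x : X | x ∈ L ∧ ∀ k, a k x ≤ c k}

/-- The epigraph of an extended-real-valued function. -/
def epigraph {X : Type*} (ψ : X → EReal) : Set (X × ℝ) := {p | ψ p.1 ≤ (p.2 : EReal)}

/-- A generalized polyhedral convex function: one whose epigraph is a generalized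
polyhedral convex set in `X × ℝ`. -/
def IsGPCF (X : Type*) [AddCommGroup X] [Module ℝ X] [TopologicalSpace X] (ψ : X → EReal) : Prop :=
  IsGPCS (X × ℝ) (epigraph ψ)

/-- A proper function: not identically `+∞` and never `-∞`. -/
def ProperFn {X : Type*} (ψ : X → EReal) : Prop := (∃ x, ψ x ≠ ⊤) ∧ ∀ x, ψ x ≠ ⊥

/-- Convexity of an extended-real-valued function, via convexity of the epigraph. -/
def ConvexFn {X : Type*} [AddCommGroup X] [Module ℝ X] (ψ : X → EReal) : Prop :=
  Convex ℝ (epigraph ψ)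

/-- The effective domain of an extended-real-valued function. -/
def domFn {X : Type*} (ψ : X → EReal) : Set X := {x | ψ x ≠ ⊤}

open Classical in
/-- The indicator function of a set: `0` on the set, `+∞` outside. -/
noncomputable def indFn {X : Type*} (C : Set X) : X → EReal := fun x => if x ∈ C then 0 else ⊤

open Classical in
/-- The DC objective `g - h` with the convention `(+∞) - (+∞) = +∞`. -/
noncomputable def dcObj {X : Type*} (g h : X → EReal) : X → EReal :=
  fun x => if g x = ⊤ ∧ h x = ⊤ then ⊤ else g x - h x

/-- The subdifferential (in the sense of convex analysis) of `φ` at `x₀`. -/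
def SubdiffAt {X : Type*} [AddCommGroup X] [Module ℝ X] [TopologicalSpace X]
    (φ : X → EReal) (x₀ : X) : Set (X →L[ℝ] ℝ) :=
  {p | ∀ x : X, ((p x - p x₀ : ℝ) : EReal) ≤ φ x - φ x₀}

/-- The subdifferential of a function defined on the dual space, with values in `X`
(the dual of `X*` in the weak* topology). -/
def SubdiffStarAt {X : Type*} [AddCommGroup X] [Module ℝ X] [TopologicalSpace X]
    (Φ : (X →L[ℝ] ℝ) → EReal) (p₀ : X →L[ℝ] ℝ) : Set X :=
  {x | ∀ p : X →L[ℝ] ℝ, ((p x - p₀ x : ℝ) : EReal) ≤ Φ p - Φ p₀}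

/-- The normal cone to a convex set `C` at `x₀ ∈ C`. -/
def normalConeAt {X : Type*} [AddCommGroup X] [Module ℝ X] [TopologicalSpace X]
    (C : Set X) (x₀ : X) : Set (X →L[ℝ] ℝ) :=
  {p | ∀ x ∈ C, p x - p x₀ ≤ 0}

/-- The Fenchel conjugate function. -/
noncomputable def conjFn {X : Type*} [AddCommGroup X] [Module ℝ X] [TopologicalSpace X]
    (φ : X → EReal) : (X →L[ℝ] ℝ) → EReal :=
  fun p => ⨆ x : X, (((p x : ℝ) : EReal) - φ x)

/-- `x₀` is a local solution of: minimize `g - h` over `C`. -/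
def IsLocalSolution {X : Type*} [TopologicalSpace X] (g h : X → EReal) (C : Set X)
    (x₀ : X) : Prop :=
  x₀ ∈ C ∧ ∃ U ∈ nhds x₀, ∀ x ∈ C ∩ U, dcObj g h x₀ ≤ dcObj g h x

/-- `x₀` is a (global) solution of: minimize `g - h` over `C`. -/
def IsSolution {X : Type*} (g h : X → EReal) (C : Set X) (x₀ : X) : Prop :=
  x₀ ∈ C ∧ ∀ x ∈ C, dcObj g h x₀ ≤ dcObj g h x

/-- `S` is open in the relative topology of `C`. -/
def RelOpenIn {X : Type*} [TopologicalSpace X] (C S : Set X) : Prop :=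
  ∃ V : Set X, IsOpen V ∧ S = C ∩ V

/-- A semi-closed generalized polyhedral convex subset of `C`: the intersection of a
generalized polyhedral convex subset of `C` with a convex subset of `C` that is open
in the relative topology of `C`. -/
def IsSemiClosedGPCSIn {X : Type*} [AddCommGroup X] [Module ℝ X] [TopologicalSpace X]
    (C S : Set X) : Prop :=
  ∃ P Q : Set X, IsGPCS X P ∧ P ⊆ C ∧ Convex ℝ Q ∧ Q ⊆ C ∧ RelOpenIn C Q ∧ S = P ∩ Q

theorem gpcf_repr {X : Type*} [AddCommGroup X] [Module ℝ X] [TopologicalSpace X]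
    (h : X → EReal) (hh2 : ProperFn h) (hh3 : IsGPCF X h) :
    ∃ (ι : Type) (_ : Fintype ι) (_ : Nonempty ι) (l : ι → X →L[ℝ] ℝ) (d : ι → ℝ),
      ∀ x, h x ≠ ⊤ → ∃ i, h x = ((l i x + d i : ℝ) : EReal) ∧
        ∀ j, l j x + d j ≤ l i x + d i := by
  classical
  obtain ⟨L, p, a, c, -, hepi⟩ := hh3
  obtain ⟨⟨x₀, hx₀⟩, hbot⟩ := hh2
  set r₀ : ℝ := (h x₀).toReal with hr₀
  have hx₀r : h x₀ = (r₀ : EReal) := (EReal.coe_toReal hx₀ (hbot x₀)).symm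
  have hz₀ : ((x₀, r₀) : X × ℝ) ∈ epigraph h := by
    simp only [epigraph, Set.mem_setOf_eq]; rw [hx₀r]
  have hz₁ : ((x₀, r₀ + 1) : X × ℝ) ∈ epigraph h := by
    simp only [epigraph, Set.mem_setOf_eq]; rw [hx₀r]
    exact_mod_cast (by linarith : r₀ ≤ r₀ + 1)
  have hz₀L : ((x₀, r₀) : X × ℝ) ∈ L := ((hepi ▸ hz₀ : _)).1
  have hz₁L : ((x₀, r₀ + 1) : X × ℝ) ∈ L := ((hepi ▸ hz₁ : _)).1
  have hdir : (((0 : X), (1 : ℝ)) : X × ℝ) ∈ L.direction := by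
    have := AffineSubspace.vsub_mem_direction hz₁L hz₀L
    simpa [Prod.ext_iff] using this
  -- membership in L along vertical lines
  have hvert : ∀ (x : X) (t t' : ℝ), ((x, t) : X × ℝ) ∈ L → ((x, t') : X × ℝ) ∈ L := by
    intro x t t' hxt
    have := AffineSubspace.vadd_mem_of_mem_direction
      (Submodule.smul_mem _ (t' - t) hdir) hxt
    simpa [Prod.ext_iff, Prod.smul_mk] using this
  -- decomposition of a k along verticals
  set β : Fin p → ℝ := fun k => a k ((0 : X), (1 : ℝ)) with hβdef
  have hak : ∀ (k : Fin p) (x : X) (t : ℝ), a k (x, t) = a k (x, 0) + t * β k := by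
    intro k x t
    have : ((x, t) : X × ℝ) = (x, 0) + t • ((0 : X), (1 : ℝ)) := by
      simp [Prod.ext_iff]
    rw [this, map_add, map_smul]; simp [hβdef]
  -- epigraph membership characterization
  have hmem : ∀ (x : X) (t : ℝ), ((x, t) : X × ℝ) ∈ epigraph h ↔
      ((x, t) : X × ℝ) ∈ L ∧ ∀ k, a k (x, t) ≤ c k := by
    intro x t
    constructor
    · intro hz; exact (hepi ▸ hz : _)
    · intro hz; exact hepi ▸ hz
  -- β k ≤ 0
  have hβle : ∀ k, β k ≤ 0 := by
    intro k
    by_contra hpos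
    push_neg at hpos
    have key : ∀ s : ℝ, 0 ≤ s → a k (x₀, 0) + (r₀ + s) * β k ≤ c k := by
      intro s hs
      have hmem' : ((x₀, r₀ + s) : X × ℝ) ∈ epigraph h := by
        simp only [epigraph, Set.mem_setOf_eq]; rw [hx₀r]
        exact_mod_cast (by linarith : r₀ ≤ r₀ + s)
      have := ((hepi ▸ hmem' : _)).2 k
      rw [hak] at this; exact this
    set A : ℝ := a k (x₀, 0) + r₀ * β k with hA
    have key' : ∀ s : ℝ, 0 ≤ s → A + s * β k ≤ c k := by
      intro s hs
      have := key s hs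
      rw [hA]; ring_nf; ring_nf at this; linarith
    set s : ℝ := max 0 ((c k - A) / β k + 1) with hsdef
    have hs0 : (0:ℝ) ≤ s := le_max_left _ _
    have hs1 : (c k - A) / β k + 1 ≤ s := le_max_right _ _
    have hmul : ((c k - A) / β k + 1) * β k ≤ s * β k :=
      mul_le_mul_of_nonneg_right hs1 hpos.le
    have hfield : ((c k - A) / β k + 1) * β k = c k - A + β k := by
      field_simp
    have := key' s hs0
    nlinarith
  -- the negative-slope indices
  have hI : ∃ k, β k < 0 := by
    by_contra hno
    push_neg at hno
    have hβ0 : ∀ k, β k = 0 := fun k => le_antisymm (hβle k) (hno k)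
    have hall : ∀ t : ℝ, h x₀ ≤ (t : EReal) := by
      intro t
      have hmem' : ((x₀, t) : X × ℝ) ∈ epigraph h := by
        rw [hmem]
        refine ⟨hvert _ _ _ hz₀L, fun k => ?_⟩
        have := ((hepi ▸ hz₀ : _)).2 k
        rw [hak] at this ⊢
        rw [hβ0 k] at this ⊢
        simpa using (by simpa using this : a k (x₀, 0) ≤ c k)
      exact hmem'
    have h1 := hall (r₀ - 1)
    rw [hx₀r] at h1
    exact absurd (by exact_mod_cast h1) (by linarith)
  -- build the family
  refine ⟨{k : Fin p // β k < 0}, inferInstance, ⟨⟨hI.choose, hI.choose_spec⟩⟩,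
    fun k => (-(β k.1))⁻¹ • ((a k.1).comp (ContinuousLinearMap.inl ℝ X ℝ)),
    fun k => (c k.1) * (β k.1)⁻¹, ?_⟩
  intro x hxtop
  set r : ℝ := (h x).toReal with hr
  have hxr : h x = (r : EReal) := (EReal.coe_toReal hxtop (hbot x)).symm
  have hzr : ((x, r) : X × ℝ) ∈ epigraph h := by
    simp only [epigraph, Set.mem_setOf_eq]; rw [hxr]
  have hzrL : ((x, r) : X × ℝ) ∈ L := ((hepi ▸ hzr : _)).1
  -- ψ values
  set ψ : {k : Fin p // β k < 0} → ℝ := fun k =>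
    (-(β k.1))⁻¹ • ((a k.1).comp (ContinuousLinearMap.inl ℝ X ℝ)) x + (c k.1) * (β k.1)⁻¹
    with hψdef
  have hψeq : ∀ k : {k : Fin p // β k < 0}, ψ k = (c k.1 - a k.1 (x, 0)) / β k.1 := by
    intro k
    have hk : β k.1 < 0 := k.2
    have hne : β k.1 ≠ 0 := ne_of_lt hk
    simp only [hψdef, ContinuousLinearMap.smul_apply, ContinuousLinearMap.comp_apply,
      ContinuousLinearMap.inl_apply, smul_eq_mul]
    rw [sub_div, div_eq_mul_inv, div_eq_mul_inv, ← neg_inv]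
    ring
  -- characterization of epigraph membership at x
  have hchar : ∀ t : ℝ, ((x, t) : X × ℝ) ∈ epigraph h ↔ ∀ k : {k : Fin p // β k < 0}, ψ k ≤ t := by
    intro t
    rw [hmem]
    constructor
    · rintro ⟨-, hks⟩ k
      have hk : β k.1 < 0 := k.2
      have := hks k.1
      rw [hak] at this
      rw [hψeq k]
      rw [div_le_iff_of_neg hk]
      linarith
    · intro hks
      refine ⟨hvert _ _ _ hzrL, fun k => ?_⟩
      rw [hak]
      by_cases hk : β k < 0
      · have := hks ⟨k, hk⟩
        rw [hψeq ⟨k, hk⟩, div_le_iff_of_neg hk] at this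
        linarith
      · have hk0 : β k = 0 := le_antisymm (hβle k) (not_lt.mp hk)
        rw [hk0, mul_zero, add_zero]
        have := ((hepi ▸ hzr : _)).2 k
        rw [hak, hk0, mul_zero, add_zero] at this
        exact this
  -- the maximum
  haveI : Nonempty {k : Fin p // β k < 0} := ⟨⟨hI.choose, hI.choose_spec⟩⟩
  obtain ⟨i, -, hi⟩ := Finset.exists_mem_eq_sup' (Finset.univ_nonempty (α := {k : Fin p // β k < 0})) ψ
  refine ⟨i, ?_, ?_⟩
  · -- h x = ψ i
    have h1 : ψ i ≤ r := by
      have := (hchar r).mp hzr i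
      exact this
    have h2 : r ≤ ψ i := by
      by_contra hlt
      push_neg at hlt
      have : ((x, ψ i) : X × ℝ) ∈ epigraph h := by
        rw [hchar]
        intro k
        rw [← hi]
        exact Finset.le_sup' ψ (Finset.mem_univ k)
      have : h x ≤ ((ψ i : ℝ) : EReal) := this
      rw [hxr] at this
      exact absurd (by exact_mod_cast this) (by linarith)
    have : r = ψ i := le_antisymm h2 h1
    rw [hxr, this]
    simp [hψdef]
  · intro j
    have := Finset.le_sup' ψ (Finset.mem_univ j)
    rw [hi] at this
    simpa [hψdef] using this

/-- if `g` is continuous on every line segment contained in `C`, then every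
connected component of the local solution set `S₁` is a union of finitely many convex
sets, and the objective `f = g - h` is constant on each connected component of `S₁`. -/
theorem stmt12 {X : Type*} [AddCommGroup X] [Module ℝ X] [TopologicalSpace X]
    [IsTopologicalAddGroup X] [ContinuousSMul ℝ X] [LocallyConvexSpace ℝ X] [T2Space X]
    (g h : X → EReal)
    (hg1 : LowerSemicontinuous g) (hg2 : ProperFn g) (hg3 : ConvexFn g)
    (hh2 : ProperFn h) (hh3 : IsGPCF X h)
    (C : Set X) (hC1 : C.Nonempty) (hC2 : IsClosed C) (hC3 : Convex ℝ C)
    (hCg : C ⊆ domFn g) (hCh : C ⊆ interior (domFn h))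
    (hgseg : ∀ a b : X, segment ℝ a b ⊆ C → ContinuousOn g (segment ℝ a b)) :
    ∀ x₀ ∈ {x : X | IsLocalSolution g h C x},
      (∃ (n : ℕ) (A : Fin n → Set X), (∀ i, Convex ℝ (A i)) ∧
        connectedComponentIn {x : X | IsLocalSolution g h C x} x₀ = ⋃ i, A i) ∧
      (∀ y ∈ connectedComponentIn {x : X | IsLocalSolution g h C x} x₀,
        dcObj g h y = dcObj g h x₀) := by
  classical
  -- real-valued versions
  set S₁ : Set X := {x : X | IsLocalSolution g h C x} with hS₁def
  have hS₁C : S₁ ⊆ C := fun x hx => hx.1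
  have hCdomh : C ⊆ domFn h := fun x hx => interior_subset (hCh hx)
  -- representation of h
  obtain ⟨ι, hfin, hne, l, d, hrep⟩ := gpcf_repr h hh2 hh3
  haveI : Fintype ι := hfin
  haveI : Nonempty ι := hne
  set ψ : ι → X → ℝ := fun i x => l i x + d i with hψdef
  have hψcont : ∀ i, Continuous (ψ i) := fun i => (l i).continuous.add continuous_const
  set H : X → ℝ := fun x => Finset.univ.sup' Finset.univ_nonempty (fun i => ψ i x) with hHdef
  have hψle : ∀ (i : ι) (x : X), ψ i x ≤ H x := fun i x =>
    Finset.le_sup' (fun i => ψ i x) (Finset.mem_univ i)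
  have hψex : ∀ x : X, ∃ i, ψ i x = H x := by
    intro x
    obtain ⟨i, -, hi⟩ := Finset.exists_mem_eq_sup' Finset.univ_nonempty (fun i => ψ i x)
    exact ⟨i, hi.symm⟩
  have hHh : ∀ x ∈ C, h x = ((H x : ℝ) : EReal) := by
    intro x hx
    obtain ⟨i, hi1, hi2⟩ := hrep x (hCdomh hx)
    have : ψ i x = H x := le_antisymm (hψle i x) ((Finset.sup'_le_iff _ _).mpr
      (fun j _ => hi2 j))
    rw [hi1, ← this]
  -- real version of g on C
  set G : X → ℝ := fun x => (g x).toReal with hGdef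
  have hGfin : ∀ x ∈ C, g x = ((G x : ℝ) : EReal) := by
    intro x hx
    exact (EReal.coe_toReal (hCg hx) (hg2.2 x)).symm
  -- dcObj in real terms on C
  have fC : ∀ x ∈ C, dcObj g h x = ((G x - H x : ℝ) : EReal) := by
    intro x hx
    have h1 : g x ≠ ⊤ := hCg hx
    have hcond : ¬(g x = ⊤ ∧ h x = ⊤) := fun hc => h1 hc.1
    simp only [dcObj, if_neg hcond]
    rw [hGfin x hx, hHh x hx, ← EReal.coe_sub]
  -- affine combination identity for ψ
  have hψaff : ∀ (i : ι) (x y : X) (a b : ℝ), a + b = 1 →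
      ψ i (a • x + b • y) = a * ψ i x + b * ψ i y := by
    intro i x y a b hab
    simp only [hψdef, map_add, map_smul, smul_eq_mul]
    have : b = 1 - a := by linarith
    subst this
    ring
  -- convexity of G on C (combining with membership)
  have hGconv : ∀ x ∈ C, ∀ y ∈ C, ∀ a b : ℝ, 0 ≤ a → 0 ≤ b → a + b = 1 →
      G (a • x + b • y) ≤ a * G x + b * G y := by
    intro x hx y hy a b ha hb hab
    have hz : a • x + b • y ∈ C := hC3 hx hy ha hb hab
    have hxe : ((x, G x) : X × ℝ) ∈ epigraph g := by
      simp only [epigraph, Set.mem_setOf_eq]; rw [hGfin x hx]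
    have hye : ((y, G y) : X × ℝ) ∈ epigraph g := by
      simp only [epigraph, Set.mem_setOf_eq]; rw [hGfin y hy]
    have hcomb := hg3 hxe hye ha hb hab
    have : g (a • x + b • y) ≤ ((a * G x + b * G y : ℝ) : EReal) := by
      simpa [epigraph, Prod.smul_mk, smul_eq_mul] using hcomb
    rw [hGfin _ hz] at this
    exact_mod_cast this
  -- minimizer sets
  set M : ι → Set X := fun i => {x | x ∈ C ∧ ∀ y ∈ C, G x - ψ i x ≤ G y - ψ i y} with hMdef
  -- local min of convex G - ψ i over C implies global
  have keyA : ∀ (i : ι) (xb : X), xb ∈ C →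
      (∀ᶠ z in nhds xb, z ∈ C → G xb - ψ i xb ≤ G z - ψ i z) → xb ∈ M i := by
    intro i xb hxb hloc
    refine ⟨hxb, fun y hy => ?_⟩
    obtain ⟨U, hUnhds, hU⟩ := Filter.eventually_iff_exists_mem.mp hloc
    -- the path t ↦ xb + t • (y - xb)
    have hγcont : Continuous (fun t : ℝ => xb + t • (y - xb)) :=
      continuous_const.add (continuous_id.smul continuous_const)
    have hγ0 : (fun t : ℝ => xb + t • (y - xb)) 0 = xb := by simp
    have : (fun t : ℝ => xb + t • (y - xb)) ⁻¹' U ∈ nhds (0 : ℝ) := by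
      apply hγcont.continuousAt.preimage_mem_nhds
      simpa using hUnhds
    obtain ⟨ε, hε, hball⟩ := Metric.mem_nhds_iff.mp this
    set t : ℝ := min (ε / 2) 1 with htdef
    have ht0 : 0 < t := lt_min (by linarith) one_pos
    have ht1 : t ≤ 1 := min_le_right _ _
    have htball : t ∈ Metric.ball (0 : ℝ) ε := by
      simp only [Metric.mem_ball, Real.dist_eq, sub_zero]
      rw [abs_of_pos ht0]
      calc t ≤ ε / 2 := min_le_left _ _
        _ < ε := by linarith
    have hzU : xb + t • (y - xb) ∈ U := hball htball
    have hzeq : xb + t • (y - xb) = (1 - t) • xb + t • y := by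
      rw [smul_sub, sub_smul, one_smul]; abel
    have hzC : xb + t • (y - xb) ∈ C := by
      rw [hzeq]; exact hC3 hxb hy (by linarith) ht0.le (by ring)
    have h1 : G xb - ψ i xb ≤ G (xb + t • (y - xb)) - ψ i (xb + t • (y - xb)) :=
      hU _ hzU hzC
    have h2 : G (xb + t • (y - xb)) ≤ (1 - t) * G xb + t * G y := by
      rw [hzeq]; exact hGconv xb hxb y hy _ _ (by linarith) ht0.le (by ring)
    have h3 : ψ i (xb + t • (y - xb)) = (1 - t) * ψ i xb + t * ψ i y := by
      rw [hzeq]; exact hψaff i xb y _ _ (by ring)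
    have h4 : t * (G xb - ψ i xb) ≤ t * (G y - ψ i y) := by nlinarith
    have := le_of_mul_le_mul_left (by linarith : t * (G xb - ψ i xb) ≤ t * (G y - ψ i y)) ht0
    linarith
  -- local solution in real terms
  have hS₁real : ∀ x ∈ S₁, ∃ U ∈ nhds x, ∀ z ∈ C, z ∈ U → G x - H x ≤ G z - H z := by
    intro x hx
    obtain ⟨hxC, U, hUnhds, hU⟩ := hx
    refine ⟨U, hUnhds, fun z hzC hzU => ?_⟩
    have := hU z ⟨hzC, hzU⟩
    rw [fC x hxC, fC z hzC] at this
    exact_mod_cast this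
  -- characterization of S₁
  have hS₁fwd : ∀ x ∈ S₁, ∀ i, ψ i x = H x → x ∈ M i := by
    intro x hx i hact
    obtain ⟨U, hUnhds, hU⟩ := hS₁real x hx
    apply keyA i x hx.1
    filter_upwards [hUnhds] with z hzU hzC
    have h1 := hU z hzC hzU
    have h2 : ψ i z ≤ H z := hψle i z
    rw [hact]
    linarith
  -- the relatively open neighborhoods preserving active indices
  have hWnbhd : ∀ x : X, ∃ W : Set X, IsOpen W ∧ x ∈ W ∧
      ∀ y ∈ W, ∀ i, ψ i y = H y → ψ i x = H x := by
    intro x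
    obtain ⟨i₀, hi₀⟩ := hψex x
    refine ⟨⋂ j, {y | ψ j x < H x → ψ j y < ψ i₀ y}, ?_, ?_, ?_⟩
    · apply isOpen_iInter_of_finite
      intro j
      by_cases hj : ψ j x < H x
      · simp only [hj, true_implies]
        exact isOpen_lt (hψcont j) (hψcont i₀)
      · have : {y | ψ j x < H x → ψ j y < ψ i₀ y} = Set.univ := by
          ext y; simp [hj]
        rw [this]; exact isOpen_univ
    · simp only [Set.mem_iInter, Set.mem_setOf_eq]
      intro j hj
      rw [hi₀]; exact hj
    · intro y hy i hacty
      by_contra hne'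
      have hlt : ψ i x < H x := lt_of_le_of_ne (hψle i x) hne'
      have := (Set.mem_iInter.mp hy i) hlt
      rw [hacty] at this
      exact absurd (lt_of_lt_of_le this (hψle i₀ y)) (lt_irrefl _)
  have hS₁bwd : ∀ x ∈ C, (∀ i, ψ i x = H x → x ∈ M i) → x ∈ S₁ := by
    intro x hxC hxM
    obtain ⟨W, hWopen, hxW, hW⟩ := hWnbhd x
    refine ⟨hxC, W, hWopen.mem_nhds hxW, ?_⟩
    rintro y ⟨hyC, hyW⟩
    obtain ⟨i, hi⟩ := hψex y
    have hacti : ψ i x = H x := hW y hyW i hi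
    have hxMi := hxM i hacti
    rw [fC x hxC, fC y hyC]
    have : G x - ψ i x ≤ G y - ψ i y := hxMi.2 y hyC
    rw [hacti, hi] at this
    exact_mod_cast this
  -- local constancy of the objective on S₁
  have hlocconst : ∀ x ∈ S₁, ∃ W : Set X, IsOpen W ∧ x ∈ W ∧
      ∀ y ∈ S₁, y ∈ W → G y - H y = G x - H x := by
    intro x hx
    obtain ⟨W, hWopen, hxW, hW⟩ := hWnbhd x
    refine ⟨W, hWopen, hxW, fun y hy hyW => ?_⟩
    obtain ⟨i, hi⟩ := hψex y
    have hactx : ψ i x = H x := hW y hyW i hi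
    have hxMi := hS₁fwd x hx i hactx
    have hyMi := hS₁fwd y hy i hi
    have h1 : G x - ψ i x ≤ G y - ψ i y := hxMi.2 y hy.1
    have h2 : G y - ψ i y ≤ G x - ψ i x := hyMi.2 x hx.1
    rw [hactx] at h1 h2
    rw [hi] at h1 h2
    linarith
  -- convex pieces
  set E : Finset ι → Set X := fun J =>
    {x | x ∈ C ∧ (∀ i, ψ i x = H x ↔ i ∈ J) ∧ ∀ i ∈ J, x ∈ M i} with hEdef
  have hES : ∀ x ∈ S₁, x ∈ E (Finset.univ.filter fun i => ψ i x = H x) := by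
    intro x hx
    refine ⟨hx.1, fun i => ?_, fun i hi => ?_⟩
    · simp [Finset.mem_filter]
    · simp only [Finset.mem_filter, Finset.mem_univ, true_and] at hi
      exact hS₁fwd x hx i hi
  have hEsub : ∀ J, E J ⊆ S₁ := by
    intro J x hx
    exact hS₁bwd x hx.1 (fun i hact => hx.2.2 i ((hx.2.1 i).mp hact))
  have hMconv : ∀ i, Convex ℝ (M i) := by
    intro i
    rintro x ⟨hxC, hxm⟩ y ⟨hyC, hym⟩ a b ha hb hab
    have hzC : a • x + b • y ∈ C := hC3 hxC hyC ha hb hab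
    refine ⟨hzC, fun w hw => ?_⟩
    have h1 : G (a • x + b • y) ≤ a * G x + b * G y := hGconv x hxC y hyC a b ha hb hab
    have h2 : ψ i (a • x + b • y) = a * ψ i x + b * ψ i y := hψaff i x y a b hab
    have h3 : a * (G x - ψ i x) ≤ a * (G w - ψ i w) :=
      mul_le_mul_of_nonneg_left (hxm w hw) ha
    have h4 : b * (G y - ψ i y) ≤ b * (G w - ψ i w) :=
      mul_le_mul_of_nonneg_left (hym w hw) hb
    have h5 : a * (G w - ψ i w) + b * (G w - ψ i w) = G w - ψ i w := by
      rw [← add_mul, hab, one_mul]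
    linarith
  have hEconv : ∀ J, Convex ℝ (E J) := by
    intro J
    rintro x ⟨hxC, hxact, hxM⟩ y ⟨hyC, hyact, hyM⟩ a b ha hb hab
    obtain ⟨i₀x, hi₀x⟩ := hψex x
    have hi₀J : i₀x ∈ J := (hxact i₀x).mp hi₀x
    set z : X := a • x + b • y with hzdef
    have hzC : z ∈ C := hC3 hxC hyC ha hb hab
    have hψz : ∀ j, ψ j z = a * ψ j x + b * ψ j y := fun j => hψaff j x y a b hab
    have hHz : H z = a * H x + b * H y := by
      apply le_antisymm
      · apply (Finset.sup'_le_iff _ _).mpr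
        intro j _
        rw [hψz j]
        exact add_le_add (mul_le_mul_of_nonneg_left (hψle j x) ha)
          (mul_le_mul_of_nonneg_left (hψle j y) hb)
      · have hyi₀ : ψ i₀x y = H y := (hyact i₀x).mpr hi₀J
        calc a * H x + b * H y = ψ i₀x z := by rw [hψz, hi₀x, hyi₀]
          _ ≤ H z := hψle i₀x z
    refine ⟨hzC, fun i => ?_, fun i hi => hMconv i (hxM i hi) (hyM i hi) ha hb hab⟩
    constructor
    · intro hact
      by_contra hiJ
      have hx' : ψ i x < H x := lt_of_le_of_ne (hψle i x) (fun hc => hiJ ((hxact i).mp hc))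
      have hy' : ψ i y < H y := lt_of_le_of_ne (hψle i y) (fun hc => hiJ ((hyact i).mp hc))
      have : ψ i z < a * H x + b * H y := by
        rw [hψz i]
        rcases eq_or_lt_of_le ha with ha' | ha'
        · have hb1 : b = 1 := by linarith
          rw [← ha', hb1]; simpa using hy'
        · have : a * ψ i x < a * H x := mul_lt_mul_of_pos_left hx' ha'
          have : b * ψ i y ≤ b * H y := mul_le_mul_of_nonneg_left hy'.le hb
          nlinarith
      rw [hact, hHz] at this
      exact absurd this (lt_irrefl _)
    · intro hiJ
      have hxi : ψ i x = H x := (hxact i).mpr hiJ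
      have hyi : ψ i y = H y := (hyact i).mpr hiJ
      rw [hψz i, hxi, hyi, hHz]
  -- now the main statement
  intro x₀ hx₀
  set K : Set X := connectedComponentIn S₁ x₀ with hKdef
  have hx₀K : x₀ ∈ K := mem_connectedComponentIn hx₀
  have hKS₁ : K ⊆ S₁ := connectedComponentIn_subset _ _
  have hEK : ∀ J, (E J ∩ K).Nonempty → E J ⊆ K := by
    intro J ⟨z, hzE, hzK⟩
    have h1 : E J ⊆ connectedComponentIn S₁ z :=
      (hEconv J).isPreconnected.subset_connectedComponentIn hzE (hEsub J)
    rwa [← connectedComponentIn_eq hzK] at h1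
  constructor
  · -- finite union of convex sets
    refine ⟨Fintype.card (Finset ι), fun k =>
      if (E ((Fintype.equivFin (Finset ι)).symm k) ∩ K).Nonempty
      then E ((Fintype.equivFin (Finset ι)).symm k) else ∅, fun k => ?_, ?_⟩
    · dsimp only
      split_ifs with hk
      · exact hEconv _
      · exact convex_empty
    · apply Set.Subset.antisymm
      · intro x hxK
        have hxS₁ : x ∈ S₁ := hKS₁ hxK
        set J : Finset ι := Finset.univ.filter fun i => ψ i x = H x with hJdef
        have hxE : x ∈ E J := hES x hxS₁
        refine Set.mem_iUnion.mpr ⟨Fintype.equivFin (Finset ι) J, ?_⟩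
        rw [Equiv.symm_apply_apply, if_pos ⟨x, hxE, hxK⟩]
        exact hxE
      · intro x hx
        obtain ⟨k, hk⟩ := Set.mem_iUnion.mp hx
        by_cases hk' : (E ((Fintype.equivFin (Finset ι)).symm k) ∩ K).Nonempty
        · rw [if_pos hk'] at hk
          exact hEK _ hk' hk
        · rw [if_neg hk'] at hk
          exact absurd hk (Set.notMem_empty x)
  · -- constancy on the connected component
    choose! W hWopen hWmem hWconst using hlocconst
    set U : Set X := ⋃ (x : X) (_ : x ∈ S₁ ∧ G x - H x = G x₀ - H x₀), W x with hUdef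
    set V : Set X := ⋃ (x : X) (_ : x ∈ S₁ ∧ G x - H x ≠ G x₀ - H x₀), W x with hVdef
    have hUopen : IsOpen U := isOpen_iUnion fun x => isOpen_iUnion fun hx => hWopen x hx.1
    have hVopen : IsOpen V := isOpen_iUnion fun x => isOpen_iUnion fun hx => hWopen x hx.1
    have hKUV : K ⊆ U ∪ V := by
      intro y hyK
      have hyS : y ∈ S₁ := hKS₁ hyK
      by_cases hy : G y - H y = G x₀ - H x₀
      · exact Or.inl (Set.mem_iUnion.mpr ⟨y, Set.mem_iUnion.mpr ⟨⟨hyS, hy⟩, hWmem y hyS⟩⟩)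
      · exact Or.inr (Set.mem_iUnion.mpr ⟨y, Set.mem_iUnion.mpr ⟨⟨hyS, hy⟩, hWmem y hyS⟩⟩)
    have hconst : ∀ y ∈ K, G y - H y = G x₀ - H x₀ := by
      have hKV : ¬(K ∩ V).Nonempty := by
        rintro ⟨z, hzK, hzV⟩
        have hzS : z ∈ S₁ := hKS₁ hzK
        -- K ∩ U is nonempty, so K ∩ U ∩ V nonempty by preconnectedness
        have hKU : (K ∩ U).Nonempty := by
          refine ⟨x₀, hx₀K, Set.mem_iUnion.mpr ⟨x₀, Set.mem_iUnion.mpr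
            ⟨⟨hx₀, rfl⟩, hWmem x₀ hx₀⟩⟩⟩
        obtain ⟨w, hwK, hwU, hwV⟩ := isPreconnected_connectedComponentIn U V hUopen hVopen
          hKUV hKU ⟨z, hzK, hzV⟩
        have hwS : w ∈ S₁ := hKS₁ hwK
        obtain ⟨xu, hxu⟩ := Set.mem_iUnion.mp hwU
        obtain ⟨hxuP, hwWu⟩ := Set.mem_iUnion.mp hxu
        obtain ⟨xv, hxv⟩ := Set.mem_iUnion.mp hwV
        obtain ⟨hxvP, hwWv⟩ := Set.mem_iUnion.mp hxv
        have e1 : G w - H w = G xu - H xu := hWconst xu hxuP.1 w hwS hwWu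
        have e2 : G w - H w = G xv - H xv := hWconst xv hxvP.1 w hwS hwWv
        rw [hxuP.2] at e1
        exact hxvP.2 (by rw [← e2, e1])
      intro y hyK
      rcases hKUV hyK with hyU | hyV
      · obtain ⟨xu, hxu⟩ := Set.mem_iUnion.mp hyU
        obtain ⟨hxuP, hyWu⟩ := Set.mem_iUnion.mp hxu
        have := hWconst xu hxuP.1 y (hKS₁ hyK) hyWu
        rw [this, hxuP.2]
      · exact absurd ⟨y, hyK, hyV⟩ hKV
    intro y hyK
    have hyC : y ∈ C := hS₁C (hKS₁ hyK)
    have hx₀C : x₀ ∈ C := hS₁C hx₀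
    rw [fC y hyC, fC x₀ hx₀C, hconst y hyK]
end

section
/- Let g, h: X → ℝ ∪ {+∞} be proper generalized polyhedral convex functions and C ⊆ X a nonempty generalized polyhedral convex set with C ⊆ dom g and C ⊆ int(dom h). Then every connected component of the local solution set of the problem: minimize f(x) = g(x) − h(x) subject to x ∈ C, is a union of finitely many semi-closed generalized polyhedral convex sets, and f is constant on each connected component. -/
open Pointwise Topology

section Helpers

variable {X : Type*} [AddCommGroup X] [Module ℝ X] [TopologicalSpace X]

lemma continuous_finset_sup'' {ι : Type*} {s : Finset ι} (hs : s.Nonempty) {f : ι → X → ℝ}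
    (hf : ∀ i, Continuous (f i)) : Continuous (fun x => s.sup' hs fun i => f i x) := by
  induction hs using Finset.Nonempty.cons_induction with
  | singleton a => simpa using hf a
  | cons a s h hs ih =>
      have heq : (fun x => (Finset.cons a s h).sup' (Finset.cons_nonempty h) fun i => f i x)
          = fun x => f a x ⊔ s.sup' hs fun i => f i x :=
        funext fun x => Finset.sup'_cons hs _
      rw [heq]
      exact (hf a).max ih

lemma isGPCS_univ' : @IsGPCS X _ _ _ Set.univ := by
  refine ⟨⊤, 0, Fin.elim0, Fin.elim0, by simp, ?_⟩
  ext x; simp only [Set.mem_univ, Set.mem_setOf_eq, AffineSubspace.mem_top, true_and, true_iff]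
  exact fun k => k.elim0

lemma isGPCS_empty' : @IsGPCS X _ _ _ (∅ : Set X) := by
  refine ⟨⊥, 0, Fin.elim0, Fin.elim0, by simp, ?_⟩
  ext x; simp

lemma IsGPCS.inter' {S T : Set X} (hS : IsGPCS X S) (hT : IsGPCS X T) : IsGPCS X (S ∩ T) := by
  obtain ⟨L1, p1, a1, c1, hc1, he1⟩ := hS
  obtain ⟨L2, p2, a2, c2, hc2, he2⟩ := hT
  refine ⟨L1 ⊓ L2, p1 + p2, Fin.append a1 a2, Fin.append c1 c2, ?_, ?_⟩
  · have : ((L1 ⊓ L2 : AffineSubspace ℝ X) : Set X) = (L1 : Set X) ∩ (L2 : Set X) := rfl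
    rw [this]; exact hc1.inter hc2
  · ext x
    simp only [Set.mem_inter_iff, he1, he2, Set.mem_setOf_eq]
    constructor
    · rintro ⟨⟨hL1, h1⟩, ⟨hL2, h2⟩⟩
      refine ⟨⟨hL1, hL2⟩, ?_⟩
      refine Fin.addCases ?_ ?_
      · intro i; rw [Fin.append_left, Fin.append_left]; exact h1 i
      · intro i; rw [Fin.append_right, Fin.append_right]; exact h2 i
    · rintro ⟨⟨hL1, hL2⟩, h⟩
      refine ⟨⟨hL1, fun i => ?_⟩, ⟨hL2, fun i => ?_⟩⟩
      · have := h (Fin.castAdd p2 i); rwa [Fin.append_left, Fin.append_left] at this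
      · have := h (Fin.natAdd p1 i); rwa [Fin.append_right, Fin.append_right] at this

lemma isGPCS_biInter' {ι : Type*} {s : Finset ι} {f : ι → Set X} (hf : ∀ i ∈ s, IsGPCS X (f i)) :
    IsGPCS X (⋂ i ∈ s, f i) := by
  classical
  induction s using Finset.induction with
  | empty => simpa using isGPCS_univ'
  | @insert a s ha ih =>
      rw [Finset.set_biInter_insert]
      exact (hf a (Finset.mem_insert_self a s)).inter'
        (ih fun i hi => hf i (Finset.mem_insert_of_mem hi))

lemma IsGPCS.convex' {S : Set X} (hS : IsGPCS X S) : Convex ℝ S := by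
  obtain ⟨L, p, a, c, _, rfl⟩ := hS
  intro x hx y hy θ τ hθ hτ hsum
  constructor
  · have : θ • x + τ • y = θ • (x -ᵥ y) +ᵥ y := by
      simp only [vsub_eq_sub, vadd_eq_add, smul_sub]
      have hτθ : τ = 1 - θ := by linarith
      rw [hτθ, sub_smul, one_smul]; abel
    rw [this]
    exact L.smul_vsub_vadd_mem θ hx.1 hy.1 hy.1
  · intro k
    have := hx.2 k; have h2 := hy.2 k
    have : a k (θ • x + τ • y) = θ * a k x + τ * a k y := by
      rw [map_add, map_smul, map_smul]; rfl
    rw [this]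
    calc θ * a k x + τ * a k y ≤ θ * c k + τ * c k := by
          apply add_le_add <;> apply mul_le_mul_of_nonneg_left <;> assumption
      _ = c k := by rw [← add_mul, hsum, one_mul]

lemma isGPCS_eqSet (e : X →L[ℝ] ℝ) (d : ℝ) : IsGPCS X {x | e x = d} := by
  refine ⟨⊤, 2, ![e, -e], ![d, -d], by simp, ?_⟩
  ext x
  simp only [Set.mem_setOf_eq, AffineSubspace.mem_top, true_and, Fin.forall_fin_two]
  simp only [Matrix.cons_val_zero, Matrix.cons_val_one, Matrix.head_cons,
    ContinuousLinearMap.neg_apply, neg_le_neg_iff]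
  constructor
  · rintro rfl; exact ⟨le_rfl, le_rfl⟩
  · rintro ⟨h1, h2⟩; exact le_antisymm h1 h2

lemma IsGPCS.preimage_affine' (w : X →L[ℝ] ℝ) (κ : ℝ) {E : Set (X × ℝ)}
    (hE : IsGPCS (X × ℝ) E) : IsGPCS X ((fun x => (x, w x + κ)) ⁻¹' E) := by
  obtain ⟨L, p, a, c, hcl, hEe⟩ := hE
  set Tlin : X →L[ℝ] X × ℝ := (ContinuousLinearMap.id ℝ X).prod w with hTlin
  have hTlin_apply : ∀ x, Tlin x = (x, w x) := fun x => rfl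
  set Taff : X →ᵃ[ℝ] X × ℝ :=
    { toFun := fun x => (x, w x + κ)
      linear := Tlin.toLinearMap
      map_vadd' := by
        intro q v
        simp only [vadd_eq_add, ContinuousLinearMap.coe_coe, hTlin_apply, map_add]
        ext <;> simp <;> ring } with hTaff
  have hTaff_apply : ∀ x, Taff x = (x, w x + κ) := fun x => rfl
  have hTcont : Continuous fun x : X => (x, w x + κ) :=
    continuous_id.prodMk (w.continuous.add continuous_const)
  refine ⟨L.comap Taff, p, fun k => (a k).comp Tlin, fun k => c k - a k (0, κ), ?_, ?_⟩
  · rw [AffineSubspace.coe_comap]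
    exact hcl.preimage hTcont
  · ext x
    have hsplit : ∀ k : Fin p, a k (x, w x + κ) = a k (x, w x) + a k (0, κ) := by
      intro k
      rw [← map_add]
      congr 1
      ext <;> simp
    simp only [Set.mem_preimage, hEe, Set.mem_setOf_eq, AffineSubspace.mem_comap, hTaff_apply,
      ContinuousLinearMap.comp_apply, hTlin_apply]
    constructor
    · rintro ⟨h1, h2⟩
      exact ⟨h1, fun k => by have := h2 k; rw [hsplit k] at this; linarith⟩
    · rintro ⟨h1, h2⟩
      exact ⟨h1, fun k => by have := h2 k; rw [hsplit k]; linarith⟩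

end Helpers

section Rep

variable {X : Type*} [AddCommGroup X] [Module ℝ X] [TopologicalSpace X]

lemma gpcf_rep (ψ : X → EReal) (hprop : ProperFn ψ) (hgp : IsGPCF X ψ) :
    ∃ (p : ℕ) (v : Fin p → (X →L[ℝ] ℝ)) (β : Fin p → ℝ) (Kf : Finset (Fin p))
      (hK : Kf.Nonempty),
      ∀ x, ψ x ≠ ⊤ → ψ x = ((Kf.sup' hK fun i => v i x + β i : ℝ) : EReal) := by
  classical
  obtain ⟨L, p, a, c, hLc, hE⟩ := hgp
  set u : Fin p → X →L[ℝ] ℝ := fun k => (a k).comp (ContinuousLinearMap.inl ℝ X ℝ) with hu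
  set b : Fin p → ℝ := fun k => a k (0, 1) with hb
  have hsplit : ∀ (k : Fin p) (x : X) (t : ℝ), a k (x, t) = u k x + t * b k := by
    intro k x t
    have hxt : ((x, t) : X × ℝ) = (x, 0) + t • ((0 : X), (1 : ℝ)) := by
      ext <;> simp
    rw [hxt, map_add, map_smul]
    simp only [hu, hb, ContinuousLinearMap.comp_apply, ContinuousLinearMap.inl_apply,
      smul_eq_mul]
  have hmem : ∀ z : X × ℝ, ψ z.1 ≤ (z.2 : EReal) ↔ (z ∈ L ∧ ∀ k, u k z.1 + z.2 * b k ≤ c k) := by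
    intro z
    have hz := Set.ext_iff.mp hE z
    simp only [epigraph, Set.mem_setOf_eq] at hz
    rw [hz]
    constructor
    · rintro ⟨h1, h2⟩; exact ⟨h1, fun k => by have := h2 k; rw [hsplit k z.1 z.2] at this; exact this⟩
    · rintro ⟨h1, h2⟩; exact ⟨h1, fun k => by rw [show z = (z.1, z.2) from rfl, hsplit k z.1 z.2]; exact h2 k⟩
  -- vertical lines
  have hline : ∀ (x : X) (r : ℝ), ψ x = (r : EReal) → ∀ t : ℝ, ((x, t) : X × ℝ) ∈ L := by
    intro x r hr t
    have h0 : ((x, r) : X × ℝ) ∈ L := ((hmem (x, r)).mp (by rw [hr])).1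
    have h1 : ((x, r + 1) : X × ℝ) ∈ L :=
      ((hmem (x, r + 1)).mp (by rw [hr]; exact_mod_cast (by linarith : r ≤ r + 1))).1
    have hl := AffineMap.lineMap_mem (t - r) h0 h1
    have : (AffineMap.lineMap ((x, r) : X × ℝ) ((x, r + 1) : X × ℝ)) (t - r) = (x, t) := by
      rw [AffineMap.lineMap_apply]
      ext <;> simp
    rwa [this] at hl
  -- real value extraction
  have hreal : ∀ x, ψ x ≠ ⊤ → ∃ r : ℝ, ψ x = (r : EReal) := by
    intro x hx
    have hb' := hprop.2 x
    lift ψ x to ℝ using ⟨hx, hb'⟩ with r hr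
    exact ⟨r, rfl⟩
  obtain ⟨x₀, hx₀⟩ := hprop.1
  obtain ⟨r₀, hr₀⟩ := hreal x₀ hx₀
  have hmem₀ : ∀ t : ℝ, r₀ ≤ t → (((x₀, t) : X × ℝ) ∈ L ∧ ∀ k, u k x₀ + t * b k ≤ c k) :=
    fun t ht => (hmem (x₀, t)).mp (by rw [hr₀]; exact_mod_cast ht)
  have hble : ∀ k, b k ≤ 0 := by
    intro k
    by_contra hbk
    push_neg at hbk
    set t := max r₀ ((c k - u k x₀) / b k + 1) with hT
    have h1 := (hmem₀ t (le_max_left _ _)).2 k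
    have ht : (c k - u k x₀) / b k < t := lt_of_lt_of_le (lt_add_one _) (le_max_right _ _)
    rw [div_lt_iff₀ hbk] at ht
    linarith
  set Kneg : Finset (Fin p) := Finset.univ.filter (fun k => b k < 0) with hKneg
  have hbz : ∀ k, k ∉ Kneg → b k = 0 := by
    intro k hk
    simp only [hKneg, Finset.mem_filter, Finset.mem_univ, true_and, not_lt] at hk
    exact le_antisymm (hble k) hk
  have hKne : Kneg.Nonempty := by
    by_contra hne
    rw [Finset.not_nonempty_iff_eq_empty] at hne
    have hall : ∀ t : ℝ, ψ x₀ ≤ (t : EReal) := by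
      intro t
      rw [hmem (x₀, t)]
      refine ⟨hline x₀ r₀ hr₀ t, fun k => ?_⟩
      have hk0 : b k = 0 := hbz k (by rw [hne]; exact Finset.notMem_empty k)
      have := (hmem₀ r₀ le_rfl).2 k
      rw [hk0] at this ⊢
      linarith
    have := hall (r₀ - 1)
    rw [hr₀] at this
    have := EReal.coe_le_coe_iff.mp this
    linarith
  refine ⟨p, fun k => -((b k)⁻¹ • u k), fun k => c k / b k, Kneg, hKne, ?_⟩
  intro x hx
  obtain ⟨r, hr⟩ := hreal x hx
  have hKmem : ∀ k ∈ Kneg, b k < 0 := by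
    intro k hk
    simp only [hKneg, Finset.mem_filter] at hk
    exact hk.2
  have happ : ∀ k, (-((b k)⁻¹ • u k)) x + c k / b k = (c k - u k x) / b k := by
    intro k
    by_cases hbk : b k = 0
    · simp [hbk]
    · simp only [ContinuousLinearMap.neg_apply, ContinuousLinearMap.smul_apply, smul_eq_mul]
      field_simp
      ring
  have key : ∀ t : ℝ, r ≤ t ↔ ∀ k ∈ Kneg, (c k - u k x) / b k ≤ t := by
    intro t
    have hmemx : ∀ s : ℝ, r ≤ s → (((x, s) : X × ℝ) ∈ L ∧ ∀ k, u k x + s * b k ≤ c k) :=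
      fun s hs => (hmem (x, s)).mp (by rw [hr]; exact_mod_cast hs)
    constructor
    · intro hrt k hk
      have h1 := (hmemx t hrt).2 k
      have hbk := hKmem k hk
      rw [div_le_iff_of_neg hbk]
      linarith
    · intro hall
      have : ψ x ≤ (t : EReal) := by
        rw [hmem (x, t)]
        refine ⟨hline x r hr t, fun k => ?_⟩
        by_cases hk : k ∈ Kneg
        · have := hall k hk
          have hbk := hKmem k hk
          rw [div_le_iff_of_neg hbk] at this
          linarith
        · have hk0 : b k = 0 := hbz k hk
          have := (hmemx r le_rfl).2 k
          rw [hk0] at this ⊢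
          linarith
      rw [hr] at this
      exact EReal.coe_le_coe_iff.mp this
  have hsup_eq : r = Kneg.sup' hKne fun i => (-((b i)⁻¹ • u i)) x + c i / b i := by
    have h1 : r ≤ Kneg.sup' hKne fun i => (-((b i)⁻¹ • u i)) x + c i / b i := by
      rw [key]
      intro k hk
      rw [← happ k]
      exact Finset.le_sup' (fun i => (-((b i)⁻¹ • u i)) x + c i / b i) hk
    have h2 : (Kneg.sup' hKne fun i => (-((b i)⁻¹ • u i)) x + c i / b i) ≤ r := by
      rw [Finset.sup'_le_iff]
      intro k hk
      rw [happ k]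
      exact (key r).mp le_rfl k hk
    linarith
  rw [hr, ← hsup_eq]

end Rep

section MoreHelpers

variable {X : Type*} [AddCommGroup X] [Module ℝ X] [TopologicalSpace X]

lemma sup'_affine_convex {p : ℕ} (v : Fin p → (X →L[ℝ] ℝ)) (β : Fin p → ℝ)
    {Kf : Finset (Fin p)} (hK : Kf.Nonempty) (x y : X) (θ τ : ℝ) (hθ : 0 ≤ θ) (hτ : 0 ≤ τ)
    (hsum : θ + τ = 1) :
    (Kf.sup' hK fun i => v i (θ • x + τ • y) + β i) ≤
      θ * (Kf.sup' hK fun i => v i x + β i) + τ * (Kf.sup' hK fun i => v i y + β i) := by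
  rw [Finset.sup'_le_iff]
  intro k hk
  have h1 : v k x + β k ≤ Kf.sup' hK fun i => v i x + β i :=
    Finset.le_sup' (fun i => v i x + β i) hk
  have h2 : v k y + β k ≤ Kf.sup' hK fun i => v i y + β i :=
    Finset.le_sup' (fun i => v i y + β i) hk
  have hsplit : v k (θ • x + τ • y) + β k = θ * (v k x + β k) + τ * (v k y + β k) := by
    rw [map_add, map_smul, map_smul]
    simp only [smul_eq_mul]
    linear_combination (β k) * hsum.symm
  rw [hsplit]
  have := mul_le_mul_of_nonneg_left h1 hθ
  have := mul_le_mul_of_nonneg_left h2 hτ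
  linarith

lemma local_to_global [IsTopologicalAddGroup X] [ContinuousSMul ℝ X] {Φ : X → ℝ}
    (hconv : ∀ (x y : X) (θ τ : ℝ), 0 ≤ θ → 0 ≤ τ → θ + τ = 1 →
      Φ (θ • x + τ • y) ≤ θ * Φ x + τ * Φ y)
    {C : Set X} (hC : Convex ℝ C) {x : X} (hx : x ∈ C)
    (hloc : ∃ U ∈ nhds x, ∀ y ∈ C ∩ U, Φ x ≤ Φ y) : ∀ y ∈ C, Φ x ≤ Φ y := by
  obtain ⟨U, hU, hlocal⟩ := hloc
  intro y hy
  have hcont : Continuous (fun t : ℝ => x + t • (y - x)) :=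
    continuous_const.add (continuous_id.smul continuous_const)
  have hmem0 : (fun t : ℝ => x + t • (y - x)) ⁻¹' U ∈ nhds (0 : ℝ) := by
    apply hcont.continuousAt.preimage_mem_nhds
    simpa using hU
  obtain ⟨ε, hε, hball⟩ := Metric.mem_nhds_iff.mp hmem0
  set t := min (ε / 2) 1 with ht
  have ht0 : 0 < t := lt_min (by linarith) one_pos
  have htε : |t| < ε := by
    rw [abs_of_pos ht0]
    calc t ≤ ε / 2 := min_le_left _ _
      _ < ε := by linarith
  have hzU : x + t • (y - x) ∈ U := by
    apply hball
    simp only [Metric.mem_ball, Real.dist_eq, sub_zero]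
    exact htε
  have heq : (1 - t) • x + t • y = x + t • (y - x) := by
    rw [smul_sub, sub_smul, one_smul]; abel
  have hzC : x + t • (y - x) ∈ C := by
    have := hC hx hy (by linarith [min_le_right (ε/2) (1:ℝ)] : (0:ℝ) ≤ 1 - t) (le_of_lt ht0)
      (by ring)
    rwa [heq] at this
  have h1 := hlocal _ ⟨hzC, hzU⟩
  have h2 := hconv x y (1 - t) t (by linarith [min_le_right (ε/2) (1:ℝ)]) (le_of_lt ht0) (by ring)
  rw [heq] at h2
  have h3 : t * Φ x ≤ t * Φ y := by linarith
  exact (mul_le_mul_iff_right₀ ht0).mp h3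

end MoreHelpers

/-- for a gpdc program, every connected component of the local solution set
is a union of finitely many semi-closed generalized polyhedral convex sets, and the
objective `f = g - h` is constant on each connected component. -/
theorem stmt13 {X : Type*} [AddCommGroup X] [Module ℝ X] [TopologicalSpace X]
    [IsTopologicalAddGroup X] [ContinuousSMul ℝ X] [LocallyConvexSpace ℝ X] [T2Space X]
    (g h : X → EReal)
    (hg2 : ProperFn g) (hg3 : IsGPCF X g)
    (hh2 : ProperFn h) (hh3 : IsGPCF X h)
    (C : Set X) (hC1 : C.Nonempty) (hC2 : IsGPCS X C)
    (hCg : C ⊆ domFn g) (hCh : C ⊆ interior (domFn h)) :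
    ∀ x₀ ∈ {x : X | IsLocalSolution g h C x},
      (∃ (n : ℕ) (A : Fin n → Set X), (∀ i, IsSemiClosedGPCSIn C (A i)) ∧
        connectedComponentIn {x : X | IsLocalSolution g h C x} x₀ = ⋃ i, A i) ∧
      (∀ y ∈ connectedComponentIn {x : X | IsLocalSolution g h C x} x₀,
        dcObj g h y = dcObj g h x₀) := by
  
  classical
  obtain ⟨pg, vg, βg, Kg, hKg, hgrep⟩ := gpcf_rep g hg2 hg3
  obtain ⟨ph, vh, βh, Kh, hKh, hhrep⟩ := gpcf_rep h hh2 hh3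
  set S : Set X := {x : X | IsLocalSolution g h C x} with hSdef
  set G : X → ℝ := fun x => Kg.sup' hKg fun i => vg i x + βg i with hGdef
  set H : X → ℝ := fun x => Kh.sup' hKh fun i => vh i x + βh i with hHdef
  set F : X → ℝ := fun x => G x - H x with hFdef
  have hgC : ∀ x ∈ C, g x = ((G x : ℝ) : EReal) := fun x hx => hgrep x (hCg hx)
  have hhC : ∀ x ∈ C, h x = ((H x : ℝ) : EReal) := fun x hx =>
    hhrep x (interior_subset (hCh hx))
  have hfC : ∀ x ∈ C, dcObj g h x = ((F x : ℝ) : EReal) := by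
    intro x hx
    have h1 := hgC x hx; have h2 := hhC x hx
    unfold dcObj
    rw [if_neg (by rw [h1]; rintro ⟨h', -⟩; exact EReal.coe_ne_top _ h'), h1, h2,
      ← EReal.coe_sub]
  have hCconv : Convex ℝ C := hC2.convex'
  have hSC : S ⊆ C := fun x hx => hx.1
  set Φ : Fin ph → X → ℝ := fun i x => G x - (vh i x + βh i) with hΦdef
  have hΦconv : ∀ (i : Fin ph) (x y : X) (θ τ : ℝ), 0 ≤ θ → 0 ≤ τ → θ + τ = 1 →
      Φ i (θ • x + τ • y) ≤ θ * Φ i x + τ * Φ i y := by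
    intro i x y θ τ hθ hτ hsum
    have h1 : G (θ • x + τ • y) ≤ θ * G x + τ * G y :=
      sup'_affine_convex vg βg hKg x y θ τ hθ hτ hsum
    have h2 : vh i (θ • x + τ • y) + βh i = θ * (vh i x + βh i) + τ * (vh i y + βh i) := by
      rw [map_add, map_smul, map_smul]
      simp only [smul_eq_mul]
      linear_combination (βh i) * hsum.symm
    show G (θ • x + τ • y) - (vh i (θ • x + τ • y) + βh i) ≤
      θ * (G x - (vh i x + βh i)) + τ * (G y - (vh i y + βh i))
    rw [h2]
    linarith
  set act : X → Finset (Fin ph) := fun x => Kh.filter (fun i => vh i x + βh i = H x)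
    with hactdef
  have hact_mem : ∀ (x : X) (i : Fin ph), i ∈ act x ↔ i ∈ Kh ∧ vh i x + βh i = H x :=
    fun x i => Finset.mem_filter
  have hHle : ∀ (x : X) (i : Fin ph), i ∈ Kh → vh i x + βh i ≤ H x :=
    fun x i hi => Finset.le_sup' (fun i => vh i x + βh i) hi
  have hact_ne : ∀ x : X, (act x).Nonempty := by
    intro x
    obtain ⟨j, hjK, hj⟩ := Finset.exists_mem_eq_sup' hKh (fun i => vh i x + βh i)
    exact ⟨j, (hact_mem x j).mpr ⟨hjK, hj.symm⟩⟩
  -- characterization of local solutions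
  have claim1 : ∀ x, IsLocalSolution g h C x →
      x ∈ C ∧ ∀ i ∈ act x, ∀ y ∈ C, Φ i x ≤ Φ i y := by
    rintro x ⟨hxC, U, hU, hloc⟩
    refine ⟨hxC, fun i hi => ?_⟩
    obtain ⟨hiK, hix⟩ := (hact_mem x i).mp hi
    apply local_to_global (hΦconv i) hCconv hxC
    refine ⟨U, hU, ?_⟩
    rintro y ⟨hyC, hyU⟩
    have hFxy : F x ≤ F y := by
      have := hloc y ⟨hyC, hyU⟩
      rw [hfC x hxC, hfC y hyC] at this
      exact EReal.coe_le_coe_iff.mp this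
    have h1 : vh i y + βh i ≤ H y := hHle y i hiK
    show G x - (vh i x + βh i) ≤ G y - (vh i y + βh i)
    have hFx : F x = G x - H x := rfl
    have hFy : F y = G y - H y := rfl
    rw [hix]
    linarith
  have claim2 : ∀ x ∈ C, (∀ i ∈ act x, ∀ y ∈ C, Φ i x ≤ Φ i y) →
      IsLocalSolution g h C x := by
    intro x hxC hmin
    refine ⟨hxC, ?_⟩
    set W : Set X := ⋂ j ∈ Kh \ act x, ⋃ i ∈ act x, {y : X | vh j y + βh j < vh i y + βh i}
      with hWdef
    have hWopen : IsOpen W := by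
      apply isOpen_biInter_finset
      intro j hj
      apply isOpen_biUnion
      intro i hi
      exact isOpen_lt ((vh j).continuous.add continuous_const)
        ((vh i).continuous.add continuous_const)
    have hxW : x ∈ W := by
      rw [hWdef]
      refine Set.mem_iInter₂.mpr fun j hj => ?_
      obtain ⟨hjK, hjn⟩ := Finset.mem_sdiff.mp hj
      obtain ⟨i, hiact⟩ := hact_ne x
      refine Set.mem_biUnion hiact ?_
      have hjlt : vh j x + βh j < H x :=
        lt_of_le_of_ne (hHle x j hjK) (fun e => hjn ((hact_mem x j).mpr ⟨hjK, e⟩))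
      have hie : vh i x + βh i = H x := ((hact_mem x i).mp hiact).2
      show vh j x + βh j < vh i x + βh i
      rw [hie]; exact hjlt
    refine ⟨W, hWopen.mem_nhds hxW, ?_⟩
    rintro y ⟨hyC, hyW⟩
    obtain ⟨j, hjK, hjatt⟩ := Finset.exists_mem_eq_sup' hKh (fun i => vh i y + βh i)
    have hjatt' : H y = vh j y + βh j := hjatt
    have hjact : j ∈ act x := by
      by_contra hjn
      have hj' : j ∈ Kh \ act x := Finset.mem_sdiff.mpr ⟨hjK, hjn⟩
      rw [hWdef] at hyW
      have := Set.mem_iInter₂.mp hyW j hj'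
      obtain ⟨i, hiact, hlt⟩ := Set.mem_iUnion₂.mp this
      have hiK : i ∈ Kh := ((hact_mem x i).mp hiact).1
      have h1 : vh i y + βh i ≤ H y := hHle y i hiK
      have h2 : vh j y + βh j < vh i y + βh i := hlt
      rw [hjatt'] at h1
      linarith
    have hmin' := hmin j hjact y hyC
    rw [hfC x hxC, hfC y hyC]
    apply EReal.coe_le_coe_iff.mpr
    have hjx : vh j x + βh j = H x := ((hact_mem x j).mp hjact).2
    have hΦ' : G x - (vh j x + βh j) ≤ G y - (vh j y + βh j) := hmin'
    show G x - H x ≤ G y - H y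
    rw [← hjx, hjatt']
    linarith
  set T : Finset (Fin ph) → Set X := fun J =>
    {x | x ∈ C ∧ act x = J ∧ ∀ i ∈ J, ∀ y ∈ C, Φ i x ≤ Φ i y} with hTdef
  have hTS : ∀ J, T J ⊆ S := by
    rintro J x ⟨hxC, hxact, hxmin⟩
    exact claim2 x hxC (by rw [hxact]; exact hxmin)
  have hST : ∀ x ∈ S, x ∈ T (act x) := by
    intro x hx
    obtain ⟨hxC, hmin⟩ := claim1 x hx
    exact ⟨hxC, rfl, hmin⟩
  have claim6 : ∀ (J : Finset (Fin ph)), ∀ x ∈ T J, ∀ y ∈ T J, F x = F y := by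
    rintro J x ⟨hxC, hxact, hxmin⟩ y ⟨hyC, hyact, hymin⟩
    have hJne : J.Nonempty := hxact ▸ hact_ne x
    obtain ⟨i₀, hi₀⟩ := hJne
    have hx0 : vh i₀ x + βh i₀ = H x := ((hact_mem x i₀).mp (hxact ▸ hi₀)).2
    have hy0 : vh i₀ y + βh i₀ = H y := ((hact_mem y i₀).mp (hyact ▸ hi₀)).2
    have h1 : G x - (vh i₀ x + βh i₀) ≤ G y - (vh i₀ y + βh i₀) := hxmin i₀ hi₀ y hyC
    have h2 : G y - (vh i₀ y + βh i₀) ≤ G x - (vh i₀ x + βh i₀) := hymin i₀ hi₀ x hxC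
    show G x - H x = G y - H y
    rw [← hx0, ← hy0]
    linarith
  have claim4 : ∀ J : Finset (Fin ph), (T J).Nonempty →
      IsSemiClosedGPCSIn C (T J) ∧ Convex ℝ (T J) := by
    rintro J ⟨z, hzC, hzact, hzmin⟩
    have hJne : J.Nonempty := hzact ▸ hact_ne z
    obtain ⟨i₀, hi₀J⟩ := hJne
    have hJK : J ⊆ Kh := by
      intro i hi
      rw [← hzact] at hi
      exact ((hact_mem z i).mp hi).1
    set ν : Fin ph → ℝ := fun i => G z - (vh i z + βh i) with hνdef
    set Sol : Fin ph → Set X := fun i =>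
      C ∩ ((fun x => (x, vh i x + (βh i + ν i))) ⁻¹' epigraph g) with hSoldef
    have hSol_char : ∀ i ∈ J, ∀ x : X,
        x ∈ Sol i ↔ (x ∈ C ∧ ∀ y ∈ C, Φ i x ≤ Φ i y) := by
      intro i hi x
      have hmem : x ∈ Sol i ↔ x ∈ C ∧ g x ≤ ((vh i x + (βh i + ν i) : ℝ) : EReal) :=
        Iff.rfl
      rw [hmem]
      constructor
      · rintro ⟨hxC, hle⟩
        rw [hgC x hxC, EReal.coe_le_coe_iff] at hle
        refine ⟨hxC, fun y hyC => ?_⟩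
        have hzle : G z - (vh i z + βh i) ≤ G y - (vh i y + βh i) := hzmin i hi y hyC
        show G x - (vh i x + βh i) ≤ G y - (vh i y + βh i)
        have hν : ν i = G z - (vh i z + βh i) := rfl
        rw [hν] at hle
        linarith
      · rintro ⟨hxC, hmin⟩
        refine ⟨hxC, ?_⟩
        rw [hgC x hxC, EReal.coe_le_coe_iff]
        have := hmin z hzC
        have hν : ν i = G z - (vh i z + βh i) := rfl
        have hΦx : Φ i x = G x - (vh i x + βh i) := rfl
        have hΦz : Φ i z = G z - (vh i z + βh i) := rfl
        rw [hΦx, hΦz] at this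
        linarith
    set P : Set X :=
      C ∩ ⋂ i ∈ J, (Sol i ∩ {x : X | (vh i - vh i₀) x = βh i₀ - βh i}) with hPdef
    set V : Set X := ⋂ j ∈ Kh \ J, {x : X | (vh j - vh i₀) x < βh i₀ - βh j} with hVdef
    set Q : Set X := C ∩ V with hQdef
    have hPg : IsGPCS X P := by
      apply hC2.inter'
      apply isGPCS_biInter'
      intro i hi
      apply IsGPCS.inter'
      · exact hC2.inter' (IsGPCS.preimage_affine' (vh i) (βh i + ν i) hg3)
      · exact isGPCS_eqSet (vh i - vh i₀) (βh i₀ - βh i)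
    have hVopen : IsOpen V := by
      apply isOpen_biInter_finset
      intro j hj
      exact isOpen_lt (vh j - vh i₀).continuous continuous_const
    have hVconv : Convex ℝ V := by
      apply convex_iInter₂
      intro j hj
      exact convex_halfSpace_lt (LinearMap.isLinear (vh j - vh i₀).toLinearMap) _
    have hsub_apply : ∀ (j : Fin ph) (x : X), (vh j - vh i₀) x = vh j x - vh i₀ x :=
      fun j x => rfl
    have hTPQ : T J = P ∩ Q := by
      ext x
      constructor
      · rintro ⟨hxC, hxact, hxmin⟩
        have hμ : ∀ i ∈ J, vh i x + βh i = H x := by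
          intro i hi
          exact ((hact_mem x i).mp (hxact ▸ hi)).2
        refine ⟨⟨hxC, ?_⟩, hxC, ?_⟩
        · refine Set.mem_iInter₂.mpr fun i hi => ?_
          refine ⟨(hSol_char i hi x).mpr ⟨hxC, hxmin i hi⟩, ?_⟩
          show (vh i - vh i₀) x = βh i₀ - βh i
          rw [hsub_apply]
          have h1 := hμ i hi
          have h2 := hμ i₀ hi₀J
          linarith
        · refine Set.mem_iInter₂.mpr fun j hj => ?_
          obtain ⟨hjK, hjn⟩ := Finset.mem_sdiff.mp hj
          have hjlt : vh j x + βh j < H x := by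
            refine lt_of_le_of_ne (hHle x j hjK) fun e => ?_
            exact hjn (hxact ▸ (hact_mem x j).mpr ⟨hjK, e⟩)
          have h2 := hμ i₀ hi₀J
          show (vh j - vh i₀) x < βh i₀ - βh j
          rw [hsub_apply]
          linarith
      · rintro ⟨⟨hxC, hxP⟩, -, hxV⟩
        have hμeq : ∀ i ∈ J, vh i x + βh i = vh i₀ x + βh i₀ := by
          intro i hi
          have := (Set.mem_iInter₂.mp hxP i hi).2
          simp only [Set.mem_setOf_eq, ContinuousLinearMap.sub_apply] at this
          linarith [this]
        have hμlt : ∀ j ∈ Kh \ J, vh j x + βh j < vh i₀ x + βh i₀ := by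
          intro j hj
          have := Set.mem_iInter₂.mp hxV j hj
          simp only [Set.mem_setOf_eq, ContinuousLinearMap.sub_apply] at this
          linarith [this]
        have hHμ : H x = vh i₀ x + βh i₀ := by
          apply le_antisymm
          · rw [hHdef]
            show (Kh.sup' hKh fun i => vh i x + βh i) ≤ vh i₀ x + βh i₀
            rw [Finset.sup'_le_iff]
            intro k hk
            by_cases hkJ : k ∈ J
            · exact le_of_eq (hμeq k hkJ)
            · exact le_of_lt (hμlt k (Finset.mem_sdiff.mpr ⟨hk, hkJ⟩))
          · exact hHle x i₀ (hJK hi₀J)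
        have hactx : act x = J := by
          ext i
          rw [hact_mem x i]
          constructor
          · rintro ⟨hiK, hie⟩
            by_contra hiJ
            have := hμlt i (Finset.mem_sdiff.mpr ⟨hiK, hiJ⟩)
            rw [hie, hHμ] at this
            exact lt_irrefl _ this
          · intro hiJ
            exact ⟨hJK hiJ, by rw [hμeq i hiJ, hHμ]⟩
        refine ⟨hxC, hactx, fun i hi => ?_⟩
        exact ((hSol_char i hi x).mp (Set.mem_iInter₂.mp hxP i hi).1).2
    have hQconv : Convex ℝ Q := hCconv.inter hVconv
    constructor
    · exact ⟨P, Q, hPg, Set.inter_subset_left, hQconv, Set.inter_subset_left,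
        ⟨V, hVopen, rfl⟩, hTPQ⟩
    · rw [hTPQ]
      exact (hPg.convex').inter hQconv
  -- assembly
  intro x₀ hx₀S
  have hx₀C : x₀ ∈ C := hSC hx₀S
  set K : Set X := connectedComponentIn S x₀ with hKdef
  have hKS : K ⊆ S := connectedComponentIn_subset _ _
  have hKsub : ∀ J, (T J ∩ K).Nonempty → T J ⊆ K := by
    rintro J ⟨w, hwT, hwK⟩
    have hpre : IsPreconnected (T J) := ((claim4 J ⟨w, hwT⟩).2).isPreconnected
    have := hpre.subset_connectedComponentIn hwT (hTS J)
    rwa [← connectedComponentIn_eq hwK] at this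
  set n := Fintype.card (Finset (Fin ph)) with hndef
  set e : Fin n ≃ Finset (Fin ph) := (Fintype.equivFin (Finset (Fin ph))).symm with hedef
  set A : Fin n → Set X := fun i =>
    if (T (e i) ∩ K).Nonempty then T (e i) else ∅ with hAdef
  have hAsemi : ∀ i, IsSemiClosedGPCSIn C (A i) := by
    intro i
    by_cases hne : (T (e i) ∩ K).Nonempty
    · have : A i = T (e i) := by rw [hAdef]; exact if_pos hne
      rw [this]
      obtain ⟨w, hw⟩ := hne
      exact (claim4 (e i) ⟨w, hw.1⟩).1
    · have : A i = ∅ := by rw [hAdef]; exact if_neg hne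
      rw [this]
      exact ⟨∅, C, isGPCS_empty', Set.empty_subset C, hCconv, subset_rfl,
        ⟨Set.univ, isOpen_univ, (Set.inter_univ C).symm⟩, (Set.empty_inter C).symm⟩
  have hKA : K = ⋃ i, A i := by
    apply Set.Subset.antisymm
    · intro y hyK
      have hyS : y ∈ S := hKS hyK
      have hyT : y ∈ T (act y) := hST y hyS
      have hne : (T (act y) ∩ K).Nonempty := ⟨y, hyT, hyK⟩
      refine Set.mem_iUnion.mpr ⟨e.symm (act y), ?_⟩
      have : A (e.symm (act y)) = T (act y) := by
        rw [hAdef]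
        simp only [e.apply_symm_apply]
        exact if_pos hne
      rw [this]
      exact hyT
    · refine Set.iUnion_subset fun i => ?_
      by_cases hne : (T (e i) ∩ K).Nonempty
      · have : A i = T (e i) := by rw [hAdef]; exact if_pos hne
        rw [this]
        exact hKsub _ hne
      · have : A i = ∅ := by rw [hAdef]; exact if_neg hne
        rw [this]
        exact Set.empty_subset _
  refine ⟨⟨n, A, hAsemi, hKA⟩, ?_⟩
  -- constancy of f on the component
  intro y hyK
  have hx₀K : x₀ ∈ K := mem_connectedComponentIn hx₀S
  have hyC : y ∈ C := hSC (hKS hyK)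
  have hAfin : ∀ i : Fin n, (F '' A i).Finite := by
    intro i
    by_cases hne : (T (e i) ∩ K).Nonempty
    · have : A i = T (e i) := by rw [hAdef]; exact if_pos hne
      rw [this]
      apply Set.Subsingleton.finite
      rintro _ ⟨x1, hx1, rfl⟩ _ ⟨x2, hx2, rfl⟩
      exact claim6 (e i) x1 hx1 x2 hx2
    · have : A i = ∅ := by rw [hAdef]; exact if_neg hne
      rw [this, Set.image_empty]
      exact Set.finite_empty
  have hFKfin : (F '' K).Finite := by
    apply Set.Finite.subset (Set.finite_iUnion hAfin)
    rw [hKA, Set.image_iUnion]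
  have hFcont : Continuous F :=
    (continuous_finset_sup'' hKg fun i => (vg i).continuous.add continuous_const).sub
      (continuous_finset_sup'' hKh fun i => (vh i).continuous.add continuous_const)
  have hKpre : IsPreconnected K := isPreconnected_connectedComponentIn
  set t1 : Set X := F ⁻¹' {F x₀} with ht1def
  set t2 : Set X := F ⁻¹' ((F '' K) \ {F x₀}) with ht2def
  have ht1 : IsClosed t1 := isClosed_singleton.preimage hFcont
  have ht2 : IsClosed t2 := ((hFKfin.diff (t := {F x₀})).isClosed).preimage hFcont
  have hcover : K ⊆ t1 ∪ t2 := by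
    intro w hw
    by_cases hw' : F w = F x₀
    · left; exact hw'
    · right; exact ⟨Set.mem_image_of_mem F hw, hw'⟩
  have hne1 : (K ∩ t1).Nonempty := ⟨x₀, hx₀K, rfl⟩
  have hFy : F y = F x₀ := by
    by_cases hne2 : (K ∩ t2).Nonempty
    · obtain ⟨w, hw⟩ := isPreconnected_closed_iff.mp hKpre t1 t2 ht1 ht2 hcover hne1 hne2
      have h1 : F w = F x₀ := hw.2.1
      have h2 : F w ∉ ({F x₀} : Set ℝ) := hw.2.2.2
      exact absurd h1 h2
    · rcases hcover hyK with hmem | hmem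
      · exact hmem
      · exact absurd ⟨y, hyK, hmem⟩ hne2
  rw [hfC y hyC, hfC x₀ hx₀C, hFy]
end

section
/- Let g, h: X → ℝ ∪ {+∞} be lower semicontinuous, proper, convex functions and C ⊆ X a nonempty closed convex set with (dom g) ∩ C ≠ ∅. Then the optimal value of the primal problem: minimize g(x) − h(x) subject to x ∈ C, equals the optimal value of the dual problem: minimize h*(x*) − (g + δ_C)*(x*) over x* ∈ X*. -/
open Pointwise Topology

section ToSiAux

open Classical

private lemma tsSubSub (m : ℝ) (x : EReal) : (m : EReal) - ((m : EReal) - x) = x := by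
  induction x with
  | bot => simp
  | coe y => norm_cast; ring
  | top => simp

private lemma tsConstSubSup {ι : Sort*} (m : ℝ) (a : ι → EReal) :
    (m : EReal) - ⨆ i, a i = ⨅ i, ((m : EReal) - a i) := by
  refine le_antisymm (le_iInf fun i => EReal.sub_le_sub le_rfl (le_iSup a i)) ?_
  have h1 : ∀ i, a i ≤ (m : EReal) - ⨅ j, ((m : EReal) - a j) := fun i => by
    calc a i = (m : EReal) - ((m : EReal) - a i) := (tsSubSub m _).symm
    _ ≤ _ := EReal.sub_le_sub le_rfl (iInf_le _ i)
  calc (⨅ i, ((m : EReal) - a i))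
      = (m : EReal) - ((m : EReal) - ⨅ i, ((m : EReal) - a i)) := (tsSubSub m _).symm
  _ ≤ (m : EReal) - ⨆ i, a i := EReal.sub_le_sub le_rfl (iSup_le h1)

private lemma tsExistsReal {a : EReal} (h1 : a ≠ ⊤) (h2 : a ≠ ⊥) : ∃ t : ℝ, a = t := by
  lift a to ℝ using ⟨h1, h2⟩
  exact ⟨a, rfl⟩

end ToSiAux

section ToSiAux2

open Classical

variable {Y : Type*}

private lemma tsDcTop (φ ψ : Y → EReal) (x : Y) (hφ : φ x = ⊤) (hψ : ψ x ≠ ⊥) :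
    dcObj φ ψ x = ⊤ := by
  unfold dcObj
  split_ifs with hc
  · rfl
  · push_neg at hc
    obtain ⟨t, ht⟩ := tsExistsReal (hc hφ) hψ
    rw [hφ, ht, EReal.top_sub_coe]

private lemma tsDcEq (φ ψ : Y → EReal) (x : Y) (hφ : φ x ≠ ⊤) :
    dcObj φ ψ x = φ x - ψ x := by
  unfold dcObj
  rw [if_neg (fun hc => hφ hc.1)]

variable {X : Type*} [AddCommGroup X] [Module ℝ X] [TopologicalSpace X]

private lemma tsFY (φ : X → EReal) (p : X →L[ℝ] ℝ) (x : X) :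
    ((p x : ℝ) : EReal) - φ x ≤ conjFn φ p := by
  unfold conjFn; exact le_iSup (fun y : X => ((p y : ℝ) : EReal) - φ y) x

private lemma tsConjNeBot (φ : X → EReal) (hφ : ProperFn φ) (p : X →L[ℝ] ℝ) :
    conjFn φ p ≠ ⊥ := by
  obtain ⟨⟨x₀, hx₀⟩, hb⟩ := hφ
  obtain ⟨t, ht⟩ := tsExistsReal hx₀ (hb x₀)
  have h1 : ((p x₀ : ℝ) : EReal) - φ x₀ ≤ conjFn φ p := tsFY φ p x₀
  rw [ht, ← EReal.coe_sub] at h1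
  intro hcon
  rw [hcon, le_bot_iff] at h1
  exact EReal.coe_ne_bot _ h1

variable [IsTopologicalAddGroup X] [ContinuousSMul ℝ X]

set_option linter.unusedSectionVars false

private lemma tsDecomp (F : (X × ℝ) →L[ℝ] ℝ) (x : X) (t : ℝ) :
    F (x, t) = F (x, 0) + t * F (0, 1) := by
  have hxt : (x, t) = (x, (0 : ℝ)) + t • ((0 : X), (1 : ℝ)) := by
    simp [Prod.ext_iff]
  rw [hxt, map_add, map_smul, smul_eq_mul]

private lemma tsSlopeNonneg {h : X → EReal} (F : (X × ℝ) →L[ℝ] ℝ) (u : ℝ)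
    (hE : ∀ b ∈ epigraph h, u < F b) {x₁ : X} {t₁ : ℝ} (hx₁ : h x₁ ≤ (t₁ : EReal)) :
    0 ≤ F (0, 1) := by
  by_contra hs
  push_neg at hs
  obtain ⟨n, hn⟩ := exists_nat_gt ((F (x₁, 0) + t₁ * F (0, 1) - u) / (-F (0, 1)))
  have hmem : ((x₁, t₁ + (n : ℝ)) : X × ℝ) ∈ epigraph h := by
    show h x₁ ≤ ((t₁ + (n : ℝ) : ℝ) : EReal)
    refine le_trans hx₁ (EReal.coe_le_coe_iff.2 ?_)
    linarith [Nat.cast_nonneg (α := ℝ) n]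
  have hlt := hE _ hmem
  rw [tsDecomp] at hlt
  rw [div_lt_iff₀ (by linarith)] at hn
  nlinarith

end ToSiAux2

section ToSiAux3

open Classical

variable {X : Type*} [AddCommGroup X] [Module ℝ X] [TopologicalSpace X]
  [IsTopologicalAddGroup X] [ContinuousSMul ℝ X]

set_option linter.unusedSectionVars false

private lemma tsRealIneq1 {s u F₀ t : ℝ} (hs : 0 < s) (hlt : u < F₀ + t * s) :
    -(s⁻¹ * F₀) - t ≤ -(u / s) := by
  rw [div_eq_mul_inv]
  have h1 : u * s⁻¹ < (F₀ + t * s) * s⁻¹ := by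
    exact mul_lt_mul_of_pos_right hlt (inv_pos.2 hs)
  have h2 : t * s * s⁻¹ = t := by field_simp
  nlinarith

private lemma tsRealIneq2 {s u F₀ t : ℝ} (hs : 0 < s) (hlt : F₀ + t * s < u) :
    t < -(s⁻¹ * F₀) - -(u / s) := by
  rw [div_eq_mul_inv]
  have h1 : (F₀ + t * s) * s⁻¹ < u * s⁻¹ := by
    exact mul_lt_mul_of_pos_right hlt (inv_pos.2 hs)
  have h2 : t * s * s⁻¹ = t := by field_simp
  nlinarith

private lemma tsPosSlope {h : X → EReal} (hb : ∀ x, h x ≠ ⊥) (F : (X × ℝ) →L[ℝ] ℝ) (u : ℝ)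
    (hE : ∀ b ∈ epigraph h, u < F b) (hs : 0 < F (0, 1)) :
    ∃ (q : X →L[ℝ] ℝ) (c : ℝ), (∀ x, ((q x : ℝ) : EReal) - h x ≤ (c : EReal)) ∧
      (∀ (x : X) (t : ℝ), F (x, t) < u → t < q x - c) := by
  set s := F (0, 1) with hsdef
  set p₀ : X →L[ℝ] ℝ := F.comp (ContinuousLinearMap.inl ℝ X ℝ) with hp₀
  have hp₀x : ∀ x : X, p₀ x = F (x, 0) := fun x => by
    simp [hp₀, ContinuousLinearMap.inl_apply]
  refine ⟨-(s⁻¹) • p₀, -(u / s), ?_, ?_⟩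
  · intro x
    by_cases hx : h x = ⊤
    · rw [hx, EReal.sub_top]; exact bot_le
    · obtain ⟨t, ht⟩ := tsExistsReal hx (hb x)
      have hmem : ((x, t) : X × ℝ) ∈ epigraph h := le_of_eq ht
      have hlt := hE _ hmem
      rw [tsDecomp, ← hp₀x] at hlt
      rw [ht, ← EReal.coe_sub, EReal.coe_le_coe_iff]
      have : (-(s⁻¹) • p₀) x = -(s⁻¹ * p₀ x) := by
        simp [neg_mul]
      rw [this]
      exact tsRealIneq1 hs hlt
  · intro x t hlt
    rw [tsDecomp, ← hp₀x] at hlt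
    have : (-(s⁻¹) • p₀) x = -(s⁻¹ * p₀ x) := by simp [neg_mul]
    rw [this]
    exact tsRealIneq2 hs hlt

private lemma tsEpiClosed {h : X → EReal} (hh1 : LowerSemicontinuous h) :
    IsClosed (epigraph h) := by
  have hcl : IsClosed {p : X × EReal | h p.1 ≤ p.2} := hh1.isClosed_epigraph
  have heq : epigraph h
      = (fun q : X × ℝ => (q.1, (q.2 : EReal))) ⁻¹' {p : X × EReal | h p.1 ≤ p.2} := rfl
  rw [heq]
  exact hcl.preimage (continuous_fst.prodMk (continuous_coe_real_ereal.comp continuous_snd))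

variable [LocallyConvexSpace ℝ X]

private lemma tsAffMin {h : X → EReal} (hh1 : LowerSemicontinuous h) (hh2 : ProperFn h)
    (hh3 : ConvexFn h) :
    ∃ (q : X →L[ℝ] ℝ) (c : ℝ), ∀ x, ((q x : ℝ) : EReal) - h x ≤ (c : EReal) := by
  obtain ⟨⟨x₁, hx₁t⟩, hxb⟩ := hh2
  obtain ⟨t₁, ht₁⟩ := tsExistsReal hx₁t (hxb x₁)
  have hnotmem : ((x₁, t₁ - 1) : X × ℝ) ∉ epigraph h := by
    intro hc
    have : h x₁ ≤ ((t₁ - 1 : ℝ) : EReal) := hc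
    rw [ht₁, EReal.coe_le_coe_iff] at this
    linarith
  obtain ⟨F, u, hFlt, hFgt⟩ :=
    geometric_hahn_banach_point_closed hh3 (tsEpiClosed hh1) hnotmem
  have hs0 : 0 ≤ F (0, 1) := tsSlopeNonneg F u hFgt ht₁.le
  have hs : 0 < F (0, 1) := by
    rcases hs0.lt_or_eq with hs | hs
    · exact hs
    · exfalso
      have h1 : F (x₁, t₁ - 1) = F (x₁, 0) + (t₁ - 1) * F (0, 1) := tsDecomp F x₁ (t₁ - 1)
      have h2 : F (x₁, t₁) = F (x₁, 0) + t₁ * F (0, 1) := tsDecomp F x₁ t₁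
      have hmem : ((x₁, t₁) : X × ℝ) ∈ epigraph h := le_of_eq ht₁
      have h3 := hFgt _ hmem
      rw [← hs] at h1 h2
      rw [h2] at h3
      rw [h1] at hFlt
      linarith
  obtain ⟨q, c, hq, -⟩ := tsPosSlope hxb F u hFgt hs
  exact ⟨q, c, hq⟩

end ToSiAux3

section ToSiAux4

open Classical

variable {X : Type*} [AddCommGroup X] [Module ℝ X] [TopologicalSpace X]
  [IsTopologicalAddGroup X] [ContinuousSMul ℝ X] [LocallyConvexSpace ℝ X]

set_option linter.unusedSectionVars false

private lemma tsBiconj {h : X → EReal} (hh1 : LowerSemicontinuous h) (hh2 : ProperFn h)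
    (hh3 : ConvexFn h) (x₀ : X) :
    h x₀ = ⨆ p : X →L[ℝ] ℝ, (((p x₀ : ℝ) : EReal) - conjFn h p) := by
  refine le_antisymm ?_ (iSup_le fun p => ?_)
  · -- h x₀ ≤ sup
    refine le_of_forall_lt_imp_le_of_dense fun a ha => ?_
    obtain ⟨r, har, hrx⟩ := EReal.exists_between_coe_real ha
    refine har.le.trans ?_
    have hnotmem : ((x₀, r) : X × ℝ) ∉ epigraph h := fun hc => absurd hc (not_le.2 hrx)
    obtain ⟨F, u, hFlt, hFgt⟩ :=
      geometric_hahn_banach_point_closed hh3 (tsEpiClosed hh1) hnotmem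
    obtain ⟨⟨x₁, hx₁t⟩, hxb⟩ := hh2
    obtain ⟨t₁, ht₁⟩ := tsExistsReal hx₁t (hxb x₁)
    have hs0 : 0 ≤ F (0, 1) := tsSlopeNonneg F u hFgt ht₁.le
    rcases hs0.lt_or_eq with hs | hs
    · -- positive slope
      obtain ⟨q, c, hq, himp⟩ := tsPosSlope hxb F u hFgt hs
      have hconj : conjFn h q ≤ (c : EReal) := by
        unfold conjFn; exact iSup_le hq
      have hr : r < q x₀ - c := himp x₀ r hFlt
      refine le_trans ?_ (le_iSup _ q)
      calc ((r : ℝ) : EReal) ≤ ((q x₀ - c : ℝ) : EReal) := EReal.coe_le_coe_iff.2 hr.le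
      _ = ((q x₀ : ℝ) : EReal) - (c : EReal) := by norm_cast
      _ ≤ ((q x₀ : ℝ) : EReal) - conjFn h q := EReal.sub_le_sub le_rfl hconj
    · -- zero slope
      obtain ⟨q₁, c₁, hq₁⟩ := tsAffMin hh1 ⟨⟨x₁, hx₁t⟩, hxb⟩ hh3
      set p₀ : X →L[ℝ] ℝ := F.comp (ContinuousLinearMap.inl ℝ X ℝ) with hp₀
      have hp₀x : ∀ x : X, p₀ x = F (x, 0) := fun x => by
        simp [hp₀, ContinuousLinearMap.inl_apply]
      have hdomlb : ∀ x, h x ≠ ⊤ → u < p₀ x := by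
        intro x hx
        obtain ⟨t, ht⟩ := tsExistsReal hx (hxb x)
        have hlt := hFgt (x, t) (le_of_eq ht)
        rw [tsDecomp, ← hs, mul_zero, add_zero, ← hp₀x] at hlt
        exact hlt
      have hx₀u : p₀ x₀ < u := by
        have hlt := hFlt
        rw [tsDecomp, ← hs, mul_zero, add_zero, ← hp₀x] at hlt
        exact hlt
      set d : ℝ := u - p₀ x₀ with hd
      have hd0 : 0 < d := by simp only [hd]; linarith
      set lam : ℝ := max 1 ((r + c₁ - q₁ x₀ + 1) / d) with hlam
      have hlam1 : (1 : ℝ) ≤ lam := le_max_left _ _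
      have hlam0 : (0 : ℝ) ≤ lam := by linarith
      set q : X →L[ℝ] ℝ := q₁ - lam • p₀ with hqdef
      have hqx : ∀ x : X, q x = q₁ x - lam * p₀ x := fun x => by
        simp [hqdef]
      have hconj : conjFn h q ≤ ((c₁ - lam * u : ℝ) : EReal) := by
        unfold conjFn
        refine iSup_le fun x => ?_
        by_cases hx : h x = ⊤
        · rw [hx, EReal.sub_top]; exact bot_le
        · obtain ⟨t, ht⟩ := tsExistsReal hx (hxb x)
          have h1 := hq₁ x
          rw [ht, ← EReal.coe_sub, EReal.coe_le_coe_iff] at h1 ⊢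
          have h2 := hdomlb x hx
          have h3 : lam * u ≤ lam * p₀ x := mul_le_mul_of_nonneg_left h2.le hlam0
          rw [hqx x]
          linarith
      refine le_trans ?_ (le_iSup _ q)
      have hmul : (r + c₁ - q₁ x₀ + 1) ≤ lam * d :=
        (div_le_iff₀ hd0).1 (le_max_right 1 _)
      have hld : lam * d = lam * u - lam * p₀ x₀ := by rw [hd]; ring
      calc ((r : ℝ) : EReal) ≤ ((q x₀ - (c₁ - lam * u) : ℝ) : EReal) := by
            rw [EReal.coe_le_coe_iff, hqx x₀]; linarith
      _ = ((q x₀ : ℝ) : EReal) - ((c₁ - lam * u : ℝ) : EReal) := by norm_cast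
      _ ≤ ((q x₀ : ℝ) : EReal) - conjFn h q := EReal.sub_le_sub le_rfl hconj
  · -- sup ≤ h x₀
    by_cases hx : h x₀ = ⊤
    · rw [hx]; exact le_top
    · obtain ⟨t, ht⟩ := tsExistsReal hx (hh2.2 x₀)
      have hfy : ((p x₀ : ℝ) : EReal) - h x₀ ≤ conjFn h p := tsFY h p x₀
      rw [ht, ← EReal.coe_sub] at hfy
      calc ((p x₀ : ℝ) : EReal) - conjFn h p
          ≤ ((p x₀ : ℝ) : EReal) - ((p x₀ - t : ℝ) : EReal) :=
            EReal.sub_le_sub le_rfl hfy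
      _ = ((t : ℝ) : EReal) := by norm_cast; ring
      _ = h x₀ := ht.symm

end ToSiAux4

/-- Toland–Singer duality: the optimal value of the primal DC program
`min_{x ∈ C} (g(x) - h(x))` equals the optimal value of the dual DC program
`min_{x* ∈ X*} (h*(x*) - (g + δ_C)*(x*))`. -/
theorem stmt14 {X : Type*} [AddCommGroup X] [Module ℝ X] [TopologicalSpace X]
    [IsTopologicalAddGroup X] [ContinuousSMul ℝ X] [LocallyConvexSpace ℝ X] [T2Space X]
    (g h : X → EReal)
    (hg1 : LowerSemicontinuous g) (hg2 : ProperFn g) (hg3 : ConvexFn g)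
    (hh1 : LowerSemicontinuous h) (hh2 : ProperFn h) (hh3 : ConvexFn h)
    (C : Set X) (hC1 : C.Nonempty) (hC2 : IsClosed C) (hC3 : Convex ℝ C)
    (hdom : (domFn g ∩ C).Nonempty) :
    (⨅ x ∈ C, dcObj g h x) =
      ⨅ p : X →L[ℝ] ℝ, dcObj (conjFn h) (conjFn (fun x => g x + indFn C x)) p := by
  classical
  set f : X → EReal := fun x => g x + indFn C x with hf
  have hfb : ∀ x, f x ≠ ⊥ := by
    intro x
    simp only [hf, ne_eq, EReal.add_eq_bot_iff, not_or]
    refine ⟨hg2.2 x, ?_⟩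
    unfold indFn; split_ifs <;> simp
  have hfC : ∀ x ∈ C, f x = g x := by
    intro x hx; simp only [hf, indFn, if_pos hx, add_zero]
  have hfnC : ∀ x, x ∉ C → f x = ⊤ := by
    intro x hx
    simp only [hf, indFn, if_neg hx]
    exact EReal.add_top_iff_ne_bot.2 (hg2.2 x)
  have hfproper : ProperFn f := by
    obtain ⟨x₀, hx₀d, hx₀C⟩ := hdom
    exact ⟨⟨x₀, by rw [hfC x₀ hx₀C]; exact hx₀d⟩, hfb⟩
  have hconjf_bot : ∀ p, conjFn f p ≠ ⊥ := tsConjNeBot f hfproper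
  have hconjh_bot : ∀ p, conjFn h p ≠ ⊥ := tsConjNeBot h hh2
  have hstepB : (⨅ x ∈ C, dcObj g h x) = ⨅ x, dcObj f h x := by
    apply le_antisymm
    · refine le_iInf fun x => ?_
      by_cases hx : x ∈ C
      · have heq : dcObj f h x = dcObj g h x := by
          unfold dcObj; rw [hfC x hx]
        exact (iInf₂_le x hx).trans_eq heq.symm
      · rw [tsDcTop f h x (hfnC x hx) (hh2.2 x)]; exact le_top
    · refine le_iInf₂ fun x hx => (iInf_le _ x).trans_eq ?_
      unfold dcObj; rw [hfC x hx]
  rw [hstepB]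
  apply le_antisymm
  · -- primal ≤ dual
    refine le_iInf fun p => ?_
    by_cases hhp : conjFn h p = ⊤
    · by_cases hfp : conjFn f p = ⊤
      · have heq : dcObj (conjFn h) (conjFn f) p = ⊤ := by
          unfold dcObj; rw [if_pos ⟨hhp, hfp⟩]
        rw [heq]; exact le_top
      · have heq : dcObj (conjFn h) (conjFn f) p = ⊤ := by
          unfold dcObj
          rw [if_neg (fun hc => hfp hc.2)]
          obtain ⟨m, hm⟩ := tsExistsReal hfp (hconjf_bot p)
          rw [hhp, hm, EReal.top_sub_coe]
        rw [heq]; exact le_top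
    · obtain ⟨m, hm⟩ := tsExistsReal hhp (hconjh_bot p)
      have hdc : dcObj (conjFn h) (conjFn f) p = (m : EReal) - conjFn f p := by
        unfold dcObj; rw [if_neg (fun hc => hhp hc.1), hm]
      rw [hdc]
      have hcf : conjFn f p = ⨆ x : X, (((p x : ℝ) : EReal) - f x) := rfl
      rw [hcf, tsConstSubSup]
      refine le_iInf fun x => ?_
      refine (iInf_le _ x).trans ?_
      by_cases hfx : f x = ⊤
      · rw [hfx, EReal.sub_top, EReal.coe_sub_bot]; exact le_top
      · obtain ⟨a, ha⟩ := tsExistsReal hfx (hfb x)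
        rw [tsDcEq f h x hfx, ha]
        by_cases hhx : h x = ⊤
        · rw [hhx, EReal.sub_top]; exact bot_le
        · obtain ⟨b, hb⟩ := tsExistsReal hhx (hh2.2 x)
          have hfy : ((p x : ℝ) : EReal) - h x ≤ conjFn h p := tsFY h p x
          rw [hb, hm, ← EReal.coe_sub, EReal.coe_le_coe_iff] at hfy
          rw [hb, ← EReal.coe_sub]
          have hR : (m : EReal) - (((p x : ℝ) : EReal) - (a : EReal))
              = ((m - (p x - a) : ℝ) : EReal) := by norm_cast
          rw [hR, EReal.coe_le_coe_iff]
          linarith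
  · -- dual ≤ primal
    have hbi := tsBiconj hh1 hh2 hh3
    refine le_iInf fun x => ?_
    by_cases hfx : f x = ⊤
    · rw [tsDcTop f h x hfx (hh2.2 x)]; exact le_top
    · obtain ⟨a, ha⟩ := tsExistsReal hfx (hfb x)
      rw [tsDcEq f h x hfx, ha, hbi x, tsConstSubSup]
      refine le_iInf fun p => ?_
      refine (iInf_le _ p).trans ?_
      by_cases hhp : conjFn h p = ⊤
      · rw [hhp, EReal.sub_top, EReal.coe_sub_bot]; exact le_top
      · obtain ⟨m, hm⟩ := tsExistsReal hhp (hconjh_bot p)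
        have hdc : dcObj (conjFn h) (conjFn f) p = (m : EReal) - conjFn f p := by
          unfold dcObj; rw [if_neg (fun hc => hhp hc.1), hm]
        rw [hdc, hm]
        have hfy : ((p x : ℝ) : EReal) - f x ≤ conjFn f p := tsFY f p x
        rw [ha, ← EReal.coe_sub] at hfy
        have hR : (a : EReal) - (((p x : ℝ) : EReal) - (m : EReal))
            = ((m - (p x - a) : ℝ) : EReal) := by norm_cast; ring
        rw [hR]
        calc (m : EReal) - conjFn f p
            ≤ (m : EReal) - ((p x - a : ℝ) : EReal) := EReal.sub_le_sub le_rfl hfy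
        _ = ((m - (p x - a) : ℝ) : EReal) := by norm_cast
end

section
/- Let g: X → ℝ ∪ {+∞} be a proper generalized polyhedral convex function and C ⊆ X a nonempty generalized polyhedral convex set with (dom g) ∩ C ≠ ∅. Then g + δ_C is a proper generalized polyhedral convex function on X, and its Fenchel conjugate (g + δ_C)* is a proper generalized polyhedral convex function on X* (equipped with the weak* topology). -/
open Pointwise Topology

open Finset

lemma cone_fg {V : Type*} [AddCommGroup V] [Module ℝ V] [FiniteDimensional ℝ V]
    (p : ℕ) (f : Fin p → V →ₗ[ℝ] ℝ) :
    ∃ (ι : Type) (_ : Fintype ι) (g : ι → V), ∀ z : V,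
      (∀ k, f k z ≤ 0) ↔ ∃ l : ι → ℝ, (∀ i, 0 ≤ l i) ∧ z = ∑ i, l i • g i := by
  classical
  induction p with
  | zero =>
    set n := Module.finrank ℝ V with hn
    obtain b := Module.finBasis ℝ V
    refine ⟨Fin n ⊕ Fin n, inferInstance, Sum.elim (fun i => b i) (fun i => -(b i)), fun z => ?_⟩
    constructor
    · intro _
      refine ⟨Sum.elim (fun i => max (b.repr z i) 0) (fun i => max (-(b.repr z i)) 0),
        fun i => by cases i <;> simp [le_max_right], ?_⟩
      rw [Fintype.sum_sum_type]
      simp only [Sum.elim_inl, Sum.elim_inr, smul_neg]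
      rw [Finset.sum_neg_distrib, ← sub_eq_add_neg, ← Finset.sum_sub_distrib]
      have : ∀ i, max (b.repr z i) 0 • (b i : V) - max (-(b.repr z i)) 0 • (b i) =
          b.repr z i • b i := by
        intro i
        rw [← sub_smul, max_zero_sub_max_neg_zero_eq_self]
      simp only [this]
      exact (b.sum_repr z).symm
    · intro _ k
      exact absurd k.2 (by simp)
  | succ p ih =>
    obtain ⟨ι, _, g, hg⟩ := ih (fun k => f k.castSucc)
    set φ := f (Fin.last p) with hφ
    set a : ι → ℝ := fun i => φ (g i) with ha
    refine ⟨ι ⊕ ι × ι, inferInstance,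
      Sum.elim (fun i => if a i ≤ 0 then g i else 0)
        (fun ij => if 0 < a ij.1 ∧ a ij.2 < 0 then
            a ij.1 • g ij.2 - a ij.2 • g ij.1 else 0), fun z => ?_⟩
    have hgen : ∀ w : ι ⊕ ι × ι, ∀ k : Fin (p+1),
        f k (Sum.elim (fun i => if a i ≤ 0 then g i else 0)
          (fun ij => if 0 < a ij.1 ∧ a ij.2 < 0 then
            a ij.1 • g ij.2 - a ij.2 • g ij.1 else 0) w) ≤ 0 := by
      intro w k
      have hsub : ∀ i : ι, ∀ k' : Fin p, f k'.castSucc (g i) ≤ 0 := by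
        intro i k'
        have := (hg (g i)).2 ⟨fun j => if j = i then 1 else 0, fun j => by positivity, by
          simp [ite_smul]⟩
        exact this k'
      rcases Fin.eq_castSucc_or_eq_last k with ⟨k', rfl⟩ | rfl
      · cases w with
        | inl i =>
          simp only [Sum.elim_inl]
          split_ifs with h
          · exact hsub i k'
          · simp
        | inr ij =>
          simp only [Sum.elim_inr]
          split_ifs with h
          · rw [map_sub, map_smul, map_smul]
            simp only [smul_eq_mul]
            have t1 : a ij.1 * f k'.castSucc (g ij.2) ≤ 0 :=
              mul_nonpos_of_nonneg_of_nonpos h.1.le (hsub ij.2 k')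
            have t2 : 0 ≤ a ij.2 * f k'.castSucc (g ij.1) := by
              have := mul_nonneg (neg_nonneg.2 h.2.le) (neg_nonneg.2 (hsub ij.1 k'))
              nlinarith [this]
            linarith
          · simp
      · cases w with
        | inl i =>
          simp only [Sum.elim_inl]
          split_ifs with h
          · exact h
          · simp
        | inr ij =>
          simp only [Sum.elim_inr]
          split_ifs with h
          · rw [map_sub, map_smul, map_smul]
            simp only [smul_eq_mul]
            have e1 : f (Fin.last p) (g ij.1) = a ij.1 := rfl
            have e2 : f (Fin.last p) (g ij.2) = a ij.2 := rfl
            rw [e1, e2]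
            exact le_of_eq (by ring)
          · simp
    constructor
    · intro hz
      obtain ⟨l, hl0, hlz⟩ := (hg z).1 (fun k => hz k.castSucc)
      set sm : ℝ := ∑ j, l j * max (-(a j)) 0 with hsm
      set sp : ℝ := ∑ i, l i * max (a i) 0 with hsp
      have hsm0 : 0 ≤ sm := Finset.sum_nonneg fun i _ => mul_nonneg (hl0 i) (le_max_right _ _)
      have hsp0 : 0 ≤ sp := Finset.sum_nonneg fun i _ => mul_nonneg (hl0 i) (le_max_right _ _)
      have hφz : φ z ≤ 0 := hz (Fin.last p)
      have hkey : sp - sm = φ z := by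
        rw [hsp, hsm, ← Finset.sum_sub_distrib, hlz, map_sum]
        refine Finset.sum_congr rfl fun i _ => ?_
        rw [map_smul, smul_eq_mul, ← mul_sub, max_zero_sub_max_neg_zero_eq_self]
      have hsm' : ∑ j, (if a j < 0 then l j * (-(a j)) else 0) = sm := by
        rw [hsm]
        refine Finset.sum_congr rfl fun j _ => ?_
        by_cases hj : a j < 0
        · rw [if_pos hj, max_eq_left (by linarith)]
        · rw [if_neg hj, max_eq_right (by simp at hj; linarith), mul_zero]
      have hsp' : ∑ i, (if 0 < a i then l i * a i else 0) = sp := by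
        rw [hsp]
        refine Finset.sum_congr rfl fun i _ => ?_
        by_cases hi : 0 < a i
        · rw [if_pos hi, max_eq_left hi.le]
        · rw [if_neg hi, max_eq_right (by simp at hi; linarith), mul_zero]
      by_cases hsm0' : sm = 0
      · have hspz : sp = 0 := le_antisymm (by linarith) hsp0
        have hzero : ∀ i, 0 < a i → l i = 0 := by
          intro i hi
          have hall := (Finset.sum_eq_zero_iff_of_nonneg
            (fun j (_ : j ∈ Finset.univ) => mul_nonneg (hl0 j) (le_max_right (a j) 0))).1
            (hsp ▸ hspz) i (Finset.mem_univ i)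
          rcases mul_eq_zero.1 hall with h | h
          · exact h
          · exact absurd h (by rw [max_eq_left hi.le]; exact hi.ne')
        refine ⟨Sum.elim (fun i => if a i ≤ 0 then l i else 0) 0, fun w => ?_, ?_⟩
        · cases w with
          | inl i => dsimp only [Sum.elim_inl]; split_ifs; exacts [hl0 i, le_refl 0]
          | inr ij => exact le_refl 0
        · rw [Fintype.sum_sum_type]
          simp only [Sum.elim_inl, Sum.elim_inr, Pi.zero_apply, zero_smul,
            Finset.sum_const_zero, add_zero]
          rw [hlz]
          refine Finset.sum_congr rfl fun i _ => ?_
          by_cases hi : a i ≤ 0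
          · rw [if_pos hi, if_pos hi]
          · rw [if_neg hi, if_neg hi, hzero i (not_le.1 hi), zero_smul, zero_smul]
      · have hsmpos : 0 < sm := lt_of_le_of_ne hsm0 (Ne.symm hsm0')
        have hsple : sp ≤ sm := by linarith
        refine ⟨Sum.elim
            (fun j => if a j < 0 then l j * (1 - sp / sm) else if a j ≤ 0 then l j else 0)
            (fun ij => if 0 < a ij.1 ∧ a ij.2 < 0 then l ij.1 * l ij.2 / sm else 0),
          fun w => ?_, ?_⟩
        · cases w with
          | inl j =>
            dsimp only [Sum.elim_inl]
            split_ifs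
            · exact mul_nonneg (hl0 j) (by rw [sub_nonneg]; exact div_le_one_of_le₀ hsple hsm0)
            · exact hl0 j
            · exact le_refl 0
          | inr ij =>
            dsimp only [Sum.elim_inr]
            split_ifs
            · exact div_nonneg (mul_nonneg (hl0 _) (hl0 _)) hsm0
            · exact le_refl 0
        · rw [Fintype.sum_sum_type, Fintype.sum_prod_type]
          simp only [Sum.elim_inl, Sum.elim_inr]
          have e1 : ∀ i j : ι, (if 0 < a i ∧ a j < 0 then l i * l j / sm else 0) •
              (if 0 < a i ∧ a j < 0 then a i • g j - a j • g i else 0) =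
              (if 0 < a i ∧ a j < 0 then (l i * l j * a i / sm) • g j else 0) +
              (if 0 < a i ∧ a j < 0 then l i * (l j * (-(a j))) / sm else 0) • g i := by
            intro i j
            by_cases hij : 0 < a i ∧ a j < 0
            · simp only [if_pos hij]
              rw [smul_sub, smul_smul, smul_smul, sub_eq_add_neg, ← neg_smul]
              congr 1 <;> ring_nf
            · simp only [if_neg hij, zero_smul, smul_zero, add_zero]
          have step : ∀ i : ι, (∑ j, (if 0 < a i ∧ a j < 0 then l i * l j / sm else 0) •
              (if 0 < a i ∧ a j < 0 then a i • g j - a j • g i else 0)) =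
              (∑ j, if 0 < a i ∧ a j < 0 then (l i * l j * a i / sm) • g j else 0) +
              (if 0 < a i then l i • g i else 0) := by
            intro i
            simp only [e1]
            rw [Finset.sum_add_distrib, ← Finset.sum_smul]
            congr 1
            by_cases hi : 0 < a i
            · simp only [hi, true_and, if_pos hi, ↓reduceIte]
              have : ∑ j, (if a j < 0 then l i * (l j * (-(a j))) / sm else 0) =
                  l i / sm * ∑ j, (if a j < 0 then l j * (-(a j)) else 0) := by
                rw [Finset.mul_sum]
                refine Finset.sum_congr rfl fun j _ => ?_
                split_ifs <;> ring
              rw [this, hsm']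
              field_simp
            · simp only [hi, false_and, if_false, if_neg hi, Finset.sum_const_zero, zero_smul]
          simp only [step]
          rw [Finset.sum_add_distrib, Finset.sum_comm]
          have swap : ∀ j : ι, (∑ i, if 0 < a i ∧ a j < 0 then (l i * l j * a i / sm) • g j else 0)
              = (if a j < 0 then (sp * l j / sm) • g j else 0) := by
            intro j
            by_cases hj : a j < 0
            · simp only [hj, and_true, if_pos hj]
              have : ∀ i : ι, (if 0 < a i then (l i * l j * a i / sm) • g j else 0) =
                  (if 0 < a i then l i * a i else 0) • (l j / sm) • g j := by
                intro i
                split_ifs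
                · rw [smul_smul]; congr 1; ring
                · rw [zero_smul]
              simp only [this]
              rw [← Finset.sum_smul, hsp', smul_smul]
              congr 1
              ring
            · simp only [hj, and_false, if_false, if_neg hj, Finset.sum_const_zero]
          simp only [swap]
          rw [← Finset.sum_add_distrib, ← Finset.sum_add_distrib, hlz]
          refine Finset.sum_congr rfl fun j _ => ?_
          rcases lt_trichotomy (a j) 0 with hj | hj | hj <;>
            split_ifs <;> try linarith
          all_goals
            match_scalars
          all_goals
            field_simp
          all_goals
            try ring
    · rintro ⟨l, hl0, rfl⟩ k
      rw [map_sum]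
      refine Finset.sum_nonpos fun w _ => ?_
      rw [map_smul, smul_eq_mul]
      exact mul_nonpos_of_nonneg_of_nonpos (hl0 w) (hgen w k)

lemma gpcs_decomp {Y : Type*} [AddCommGroup Y] [Module ℝ Y]
    (L₀ : Submodule ℝ Y) (p : ℕ) (a : Fin p → Y →ₗ[ℝ] ℝ) (c' : Fin p → ℝ) :
    ∃ (ι : Type) (_ : Fintype ι) (u : ι → Y) (s : ι → ℝ),
      (∀ i, u i ∈ L₀ ∧ 0 ≤ s i ∧ ∀ k, a k (u i) ≤ s i * c' k) ∧
      ∀ v ∈ L₀, (∀ k, a k v ≤ c' k) → ∃ lam : ι → ℝ, (∀ i, 0 ≤ lam i) ∧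
        (∑ i, lam i * s i) = 1 ∧ (v - ∑ i, lam i • u i) ∈ L₀ ∧
        ∀ k, a k (v - ∑ i, lam i • u i) = 0 := by
  classical
  set A : Y →ₗ[ℝ] (Fin p → ℝ) := LinearMap.pi a with hA
  set W : Submodule ℝ ((Fin p → ℝ) × ℝ) := (L₀.map A).prod ⊤ with hW
  set F : Fin (p+1) → (↥W →ₗ[ℝ] ℝ) := fun k =>
    Fin.lastCases ((-(LinearMap.snd ℝ (Fin p → ℝ) ℝ)).comp W.subtype)
      (fun k' => ((LinearMap.proj k').comp (LinearMap.fst ℝ (Fin p → ℝ) ℝ)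
        - c' k' • LinearMap.snd ℝ (Fin p → ℝ) ℝ).comp W.subtype) k with hF
  obtain ⟨ι, _, G, hG⟩ := cone_fg (p+1) F
  have hGcone : ∀ i k, F k (G i) ≤ 0 := by
    intro i k
    refine (hG (G i)).2 ⟨fun j => if j = i then 1 else 0, fun j => by positivity, by
      simp [ite_smul]⟩ k
  have hmem : ∀ i, ∃ y, y ∈ L₀ ∧ A y = (G i : (Fin p → ℝ) × ℝ).1 := by
    intro i
    have := (Submodule.mem_prod.1 (G i).2).1
    exact Submodule.mem_map.1 this
  choose u hu hAu using hmem
  set s : ι → ℝ := fun i => (G i : (Fin p → ℝ) × ℝ).2 with hs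
  have hslast : ∀ i, F (Fin.last p) (G i) = -(s i) := by
    intro i; simp [hF, Fin.lastCases_last]; rfl
  have hcast : ∀ (i : ι) (k : Fin p), F k.castSucc (G i) =
      a k (u i) - c' k * s i := by
    intro i k
    simp only [hF, Fin.lastCases_castSucc]
    simp [LinearMap.sub_apply, hAu i ▸ (rfl : A (u i) = A (u i)), smul_eq_mul]
    rw [← hAu i]
    simp [hA]
    exact Or.inl rfl
  refine ⟨ι, ‹Fintype ι›, u, s, fun i => ⟨hu i, ?_, fun k => ?_⟩, ?_⟩
  · have := hGcone i (Fin.last p); rw [hslast i] at this; linarith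
  · have := hGcone i k.castSucc; rw [hcast i k] at this; linarith [mul_comm (c' k) (s i)]
  · intro v hv hvc
    have hwmem : (A v, (1:ℝ)) ∈ W := by
      refine Submodule.mem_prod.2 ⟨Submodule.mem_map_of_mem hv, trivial⟩
    set w : ↥W := ⟨(A v, 1), hwmem⟩ with hw
    have hcone : ∀ k, F k w ≤ 0 := by
      intro k
      refine Fin.lastCases ?_ (fun k' => ?_) k
      · simp [hF, Fin.lastCases_last, hw]
      · simp only [hF, Fin.lastCases_castSucc]
        simp [hw, hA, smul_eq_mul]
        linarith [hvc k']
    obtain ⟨lam, hlam0, hweq⟩ := (hG w).1 hcone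
    have hweq' : ((w : (Fin p → ℝ) × ℝ)) = ∑ i, lam i • (G i : (Fin p → ℝ) × ℝ) := by
      rw [hweq]; push_cast; rfl
    have h1 : A v = ∑ i, lam i • (G i : (Fin p → ℝ) × ℝ).1 := by
      have := congrArg Prod.fst hweq'
      simpa [Prod.fst_sum, Prod.smul_fst] using this
    have h2 : (1:ℝ) = ∑ i, lam i * s i := by
      have := congrArg Prod.snd hweq'
      simpa [Prod.snd_sum, Prod.smul_snd, hs, smul_eq_mul] using this
    have hAeq : A (v - ∑ i, lam i • u i) = 0 := by
      rw [map_sub, map_sum, h1, sub_eq_zero]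
      refine Finset.sum_congr rfl fun i _ => ?_
      rw [map_smul, hAu i]
    refine ⟨lam, hlam0, h2.symm, sub_mem hv (Submodule.sum_mem _ fun i _ =>
      Submodule.smul_mem _ _ (hu i)), fun k => ?_⟩
    have := congrFun (congrArg (fun q => q) hAeq) k
    have : A (v - ∑ i, lam i • u i) k = 0 := by rw [hAeq]; rfl
    simpa [hA] using this

lemma isGPCS_inter {X : Type*} [AddCommGroup X] [Module ℝ X] [TopologicalSpace X]
    {S T : Set X} (hS : IsGPCS X S) (hT : IsGPCS X T) : IsGPCS X (S ∩ T) := by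
  obtain ⟨L1, p1, a1, c1, h1c, h1⟩ := hS
  obtain ⟨L2, p2, a2, c2, h2c, h2⟩ := hT
  refine ⟨L1 ⊓ L2, p1 + p2, Fin.append a1 a2, Fin.append c1 c2, ?_, ?_⟩
  · have : ((L1 ⊓ L2 : AffineSubspace ℝ X) : Set X) = (L1 : Set X) ∩ (L2 : Set X) := rfl
    rw [this]; exact h1c.inter h2c
  · ext x
    simp only [h1, h2, Set.mem_inter_iff, Set.mem_setOf_eq, AffineSubspace.mem_inf_iff]
    constructor
    · rintro ⟨⟨hx1, hk1⟩, hx2, hk2⟩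
      refine ⟨⟨hx1, hx2⟩, fun k => ?_⟩
      refine Fin.addCases (fun k1 => ?_) (fun k2 => ?_) k
      · rw [Fin.append_left, Fin.append_left]; exact hk1 k1
      · rw [Fin.append_right, Fin.append_right]; exact hk2 k2
    · rintro ⟨⟨hx1, hx2⟩, hk⟩
      refine ⟨⟨hx1, fun k1 => ?_⟩, hx2, fun k2 => ?_⟩
      · have := hk (Fin.castAdd p2 k1); rwa [Fin.append_left, Fin.append_left] at this
      · have := hk (Fin.natAdd p1 k2); rwa [Fin.append_right, Fin.append_right] at this

lemma isGPCS_prod_univ {X : Type*} [AddCommGroup X] [Module ℝ X] [TopologicalSpace X]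
    [IsTopologicalAddGroup X] {C : Set X} (hC : IsGPCS X C) :
    IsGPCS (X × ℝ) (C ×ˢ (Set.univ : Set ℝ)) := by
  obtain ⟨L, p, a, c, hc, hC⟩ := hC
  refine ⟨AffineSubspace.mk ((L : Set X) ×ˢ (Set.univ : Set ℝ)) ?_, p,
      fun k => (a k).comp (ContinuousLinearMap.fst ℝ X ℝ), c, ?_, ?_⟩
  · rintro t p1 p2 p3 ⟨h1, -⟩ ⟨h2, -⟩ ⟨h3, -⟩
    exact ⟨L.smul_vsub_vadd_mem t h1 h2 h3, trivial⟩
  · exact hc.prod isClosed_univ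
  · ext y
    simp only [hC, Set.mem_prod, Set.mem_setOf_eq, Set.mem_univ, and_true,
      ContinuousLinearMap.comp_apply, ContinuousLinearMap.coe_fst']
    have hmem : ∀ y : X × ℝ, y ∈ AffineSubspace.mk ((L : Set X) ×ˢ (Set.univ : Set ℝ))
        (by rintro t p1 p2 p3 ⟨h1, -⟩ ⟨h2, -⟩ ⟨h3, -⟩
            exact ⟨L.smul_vsub_vadd_mem t h1 h2 h3, trivial⟩) ↔ y.1 ∈ L := by
      intro y
      constructor
      · rintro ⟨h, -⟩; exact h
      · intro h; exact ⟨h, trivial⟩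
    rw [hmem]

set_option maxHeartbeats 1000000 in
/-- `g + δ_C` is a proper generalized polyhedral convex function on `X`,
and its Fenchel conjugate is a proper generalized polyhedral convex function on the dual
space `X*` equipped with the weak* topology. -/
theorem stmt15 {X : Type*} [AddCommGroup X] [Module ℝ X] [TopologicalSpace X]
    [IsTopologicalAddGroup X] [ContinuousSMul ℝ X] [LocallyConvexSpace ℝ X] [T2Space X]
    (g : X → EReal) (hg2 : ProperFn g) (hg3 : IsGPCF X g)
    (C : Set X) (hC1 : C.Nonempty) (hC2 : IsGPCS X C)
    (hdom : (domFn g ∩ C).Nonempty) :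
    (ProperFn (fun x => g x + indFn C x) ∧ IsGPCF X (fun x => g x + indFn C x)) ∧
    (ProperFn (fun p : WeakDual ℝ X => ⨆ x : X, (((p x : ℝ) : EReal) - (g x + indFn C x))) ∧
      IsGPCF (WeakDual ℝ X)
        (fun p : WeakDual ℝ X => ⨆ x : X, (((p x : ℝ) : EReal) - (g x + indFn C x)))) := by
  classical
  set f : X → EReal := fun x => g x + indFn C x with hf
  obtain ⟨x0, hx0dom, hx0C⟩ := hdom
  have hx0dom' : g x0 ≠ ⊤ := hx0dom
  have hind : ∀ x, x ∈ C → f x = g x := by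
    intro x hx; simp only [hf, indFn, if_pos hx, add_zero]
  have hind' : ∀ x, x ∉ C → f x = ⊤ := by
    intro x hx
    simp only [hf, indFn, if_neg hx]
    exact EReal.add_top_of_ne_bot (hg2.2 x)
  have hfbot : ∀ x, f x ≠ ⊥ := by
    intro x h
    rcases EReal.add_eq_bot_iff.1 h with h' | h'
    · exact hg2.2 x h'
    · revert h'
      simp only [indFn]
      split_ifs <;> simp
  have hfx0top : f x0 ≠ ⊤ := by rw [hind x0 hx0C]; exact hx0dom'
  -- epigraph of f
  have hepi : epigraph f = epigraph g ∩ (C ×ˢ (Set.univ : Set ℝ)) := by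
    ext y
    simp only [epigraph, Set.mem_inter_iff, Set.mem_setOf_eq, Set.mem_prod, Set.mem_univ,
      and_true]
    by_cases hy : y.1 ∈ C
    · rw [hind y.1 hy]; simp [hy]
    · rw [hind' y.1 hy]; simp [hy]
  have hEf : IsGPCS (X × ℝ) (epigraph f) := by
    rw [hepi]; exact isGPCS_inter hg3 (isGPCS_prod_univ hC2)
  have hproper1 : ProperFn f := ⟨⟨x0, hfx0top⟩, hfbot⟩
  refine ⟨⟨hproper1, hEf⟩, ?_⟩
  -- ### setup for the conjugate
  obtain ⟨L, np, a, c, hLc, hE⟩ := hEf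
  have hEmem : ∀ y : X × ℝ, y ∈ epigraph f ↔ (y ∈ L ∧ ∀ k, a k y ≤ c k) :=
    fun y => by rw [Set.ext_iff] at hE; exact hE y
  set r0 : ℝ := (f x0).toReal with hr0
  have hfx0 : f x0 = (r0 : EReal) := (EReal.coe_toReal hfx0top (hfbot x0)).symm
  set y0 : X × ℝ := (x0, r0) with hy0def
  have hy0E : y0 ∈ epigraph f := by
    simp only [epigraph, Set.mem_setOf_eq, hy0def, hfx0]; exact le_refl _
  have hy0 : y0 ∈ L ∧ ∀ k, a k y0 ≤ c k := (hEmem y0).1 hy0E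
  -- linear functional associated to a dual pair
  set T : WeakDual ℝ X → ((X × ℝ) →ₗ[ℝ] ℝ) := fun P =>
    (ContinuousLinearMap.toLinearMap (P : X →L[ℝ] ℝ)).comp (LinearMap.fst ℝ X ℝ)
      - (LinearMap.snd ℝ X ℝ) with hT
  have hTapp : ∀ P y, T P y = P y.1 - y.2 := fun P y => rfl
  -- archimedean helper
  have harch : ∀ (T' : (X × ℝ) →ₗ[ℝ] ℝ) (t : ℝ) (y : X × ℝ) (w : X × ℝ),
      (∀ n : ℕ, T' (y + (n : ℝ) • w) ≤ t) → T' w ≤ 0 := by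
    intro T' t y w h
    by_contra hpos
    push_neg at hpos
    obtain ⟨n, hn⟩ := exists_nat_gt ((t - T' y) / T' w)
    have h2 := h n
    rw [map_add, map_smul, smul_eq_mul] at h2
    have := (div_lt_iff₀ hpos).1 hn
    linarith
  -- the direction (0,1)
  have h01L : ((0 : X), (1 : ℝ)) ∈ L.direction := by
    have h1 : (x0, r0 + 1) ∈ L := by
      refine ((hEmem (x0, r0 + 1)).1 ?_).1
      simp only [epigraph, Set.mem_setOf_eq, hfx0]
      exact_mod_cast (by linarith : r0 ≤ r0 + 1)
    have := AffineSubspace.vsub_mem_direction h1 hy0.1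
    have he : (x0, r0 + 1) -ᵥ y0 = ((0 : X), (1 : ℝ)) := by
      simp [hy0def, Prod.ext_iff]
    rwa [he] at this
  have hmemE : ∀ (w : X × ℝ), w ∈ L.direction → (∀ k, a k w ≤ 0) → ∀ n : ℕ,
      y0 + (n : ℝ) • w ∈ epigraph f := by
    intro w hw hwk n
    refine (hEmem _).2 ⟨?_, fun k => ?_⟩
    · have := AffineSubspace.vadd_mem_of_mem_direction
        (Submodule.smul_mem _ (n : ℝ) hw) hy0.1
      simpa [vadd_eq_add, add_comm] using this
    · rw [map_add, map_smul, smul_eq_mul]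
      have : (n : ℝ) * a k w ≤ 0 :=
        mul_nonpos_of_nonneg_of_nonpos (Nat.cast_nonneg n) (hwk k)
      linarith [hy0.2 k]
  have hβ : ∀ k, a k ((0 : X), (1 : ℝ)) ≤ 0 := by
    intro k
    refine harch ((a k) : (X × ℝ) →ₗ[ℝ] ℝ) (c k) y0 _ (fun n => ?_)
    have hpt : y0 + (n : ℝ) • ((0 : X), (1 : ℝ)) = (x0, r0 + (n : ℝ)) := by
      simp [hy0def, Prod.ext_iff]
    have hmem : y0 + (n : ℝ) • ((0 : X), (1 : ℝ)) ∈ epigraph f := by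
      rw [hpt]
      simp only [epigraph, Set.mem_setOf_eq, hfx0]
      exact_mod_cast le_add_of_nonneg_right (Nat.cast_nonneg n)
    exact ((hEmem _).1 hmem).2 k
  have hexk : ∃ k, a k ((0 : X), (1 : ℝ)) < 0 := by
    by_contra hno
    push_neg at hno
    have hz : ∀ k, a k ((0 : X), (1 : ℝ)) = 0 := fun k => le_antisymm (hβ k) (hno k)
    have hmem : (x0, r0 - 1) ∈ epigraph f := by
      refine (hEmem _).2 ⟨?_, fun k => ?_⟩
      · have := AffineSubspace.vadd_mem_of_mem_direction
          (Submodule.smul_mem _ (-1 : ℝ) h01L) hy0.1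
        have he : ((-1 : ℝ) • ((0 : X), (1 : ℝ))) +ᵥ y0 = (x0, r0 - 1) := by
          simp [hy0def, Prod.ext_iff]; ring
        rwa [he] at this
      · have he : (x0, r0 - 1) = y0 + (-1 : ℝ) • ((0 : X), (1 : ℝ)) := by
          simp [hy0def, Prod.ext_iff]; ring
        rw [he, map_add, map_smul, smul_eq_mul, hz k]
        simpa using hy0.2 k
    have : f x0 ≤ ((r0 - 1 : ℝ) : EReal) := hmem
    rw [hfx0, EReal.coe_le_coe_iff] at this
    linarith
  -- the bridge between the conjugate and the epigraph
  have hbridge : ∀ (P : WeakDual ℝ X) (t : ℝ),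
      (⨆ x : X, (((P x : ℝ) : EReal) - f x)) ≤ (t : EReal) ↔
      ∀ y ∈ epigraph f, P y.1 - y.2 ≤ t := by
    intro P t
    constructor
    · intro h y hy
      have hy' : f y.1 ≤ (y.2 : EReal) := hy
      have hne : f y.1 ≠ ⊤ := fun e => by
        rw [e] at hy'; exact absurd (top_le_iff.1 hy') (EReal.coe_ne_top y.2)
      obtain ⟨ρ, hρ⟩ : ∃ ρ : ℝ, f y.1 = (ρ : EReal) :=
        ⟨(f y.1).toReal, (EReal.coe_toReal hne (hfbot y.1)).symm⟩
      have h1 : ((P y.1 : ℝ) : EReal) - f y.1 ≤ (t : EReal) :=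
        le_trans (le_iSup (fun x => ((P x : ℝ) : EReal) - f x) y.1) h
      rw [hρ, ← EReal.coe_sub, EReal.coe_le_coe_iff] at h1
      rw [hρ, EReal.coe_le_coe_iff] at hy'
      linarith
    · intro h
      refine iSup_le fun x => ?_
      by_cases hx : f x = ⊤
      · rw [hx, EReal.sub_top]; exact bot_le
      · obtain ⟨ρ, hρ⟩ : ∃ ρ : ℝ, f x = (ρ : EReal) :=
          ⟨(f x).toReal, (EReal.coe_toReal hx (hfbot x)).symm⟩
        have hmem : (x, ρ) ∈ epigraph f := by
          show f x ≤ ((x, ρ).2 : EReal)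
          rw [hρ]
        have h2 := h (x, ρ) hmem
        calc ((P x : ℝ) : EReal) - f x = ((P x - ρ : ℝ) : EReal) := by
              rw [EReal.coe_sub, hρ]
          _ ≤ (t : EReal) := EReal.coe_le_coe_iff.2 (by simpa using h2)
  -- properness of the conjugate
  have hproper2 : ProperFn (fun P : WeakDual ℝ X => ⨆ x : X, (((P x : ℝ) : EReal) - f x)) := by
    constructor
    · obtain ⟨k0, hk0⟩ := hexk
      set β : ℝ := a k0 ((0 : X), (1 : ℝ)) with hβdef
      set p0 : WeakDual ℝ X :=
        ((-β)⁻¹ • ((a k0).comp (ContinuousLinearMap.inl ℝ X ℝ)) : X →L[ℝ] ℝ) with hp0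
      refine ⟨p0, ?_⟩
      have hble : (⨆ x : X, (((p0 x : ℝ) : EReal) - f x)) ≤ (((-β)⁻¹ * c k0 : ℝ) : EReal) := by
        rw [hbridge]
        intro y hy
        have hky := ((hEmem y).1 hy).2 k0
        have hdecomp : a k0 y = a k0 (y.1, (0:ℝ)) + y.2 * β := by
          have : y = (y.1, (0:ℝ)) + y.2 • ((0 : X), (1 : ℝ)) := by
            simp [Prod.ext_iff]
          rw [hβdef]
          nth_rewrite 1 [this]
          rw [map_add, map_smul, smul_eq_mul]
        have hp0y : p0 y.1 = (-β)⁻¹ * a k0 (y.1, (0:ℝ)) := by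
          rw [hp0]
          rfl
        have hβpos : 0 < -β := by linarith
        rw [hp0y]
        have heq : (-β)⁻¹ * a k0 (y.1, (0:ℝ)) - y.2 =
            (-β)⁻¹ * (a k0 (y.1, (0:ℝ)) + y.2 * β) := by
          have hβne : β ≠ 0 := by linarith
          field_simp
          ring
        rw [heq, ← hdecomp]
        exact mul_le_mul_of_nonneg_left hky (inv_nonneg.2 hβpos.le)
      exact (lt_of_le_of_lt hble (EReal.coe_lt_top _)).ne
    · intro P hbot
      have h1 : ((P x0 : ℝ) : EReal) - f x0 ≤ ⨆ x : X, (((P x : ℝ) : EReal) - f x) :=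
        le_iSup (fun x => ((P x : ℝ) : EReal) - f x) x0
      rw [hfx0, ← EReal.coe_sub] at h1
      have hbot' : (⨆ x : X, (((P x : ℝ) : EReal) - f x)) = ⊥ := hbot
      rw [hbot'] at h1
      exact absurd (le_bot_iff.1 h1) (EReal.coe_ne_bot _)
  refine ⟨hproper2, ?_⟩
  -- ### the epigraph of the conjugate is generalized polyhedral convex
  obtain ⟨ι, hι, u, s, hgen, hdec⟩ := gpcs_decomp L.direction np
    (fun k => ((a k) : (X × ℝ) →ₗ[ℝ] ℝ)) (fun k => c k - a k y0)
  set X0 : Set (X × ℝ) := {w | w ∈ L.direction ∧ ∀ k, a k w = 0} with hX0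
  have evmk : ∀ x : X, ∃ ev : WeakDual ℝ X →L[ℝ] ℝ, ∀ P : WeakDual ℝ X, ev P = P x := by
    intro x
    exact ⟨⟨⟨⟨fun P => P x, fun P Q => rfl⟩, fun t P => rfl⟩,
      WeakDual.eval_continuous x⟩, fun P => rfl⟩
  choose ev hev using evmk
  set ψ : ι → (WeakDual ℝ X × ℝ →L[ℝ] ℝ) := fun i =>
    (ev ((u i).1 + s i • x0)).comp (ContinuousLinearMap.fst ℝ (WeakDual ℝ X) ℝ)
      - s i • (ContinuousLinearMap.snd ℝ (WeakDual ℝ X) ℝ) with hψ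
  have hψapp : ∀ (i : ι) (pt : WeakDual ℝ X × ℝ),
      ψ i pt = pt.1 ((u i).1 + s i • x0) - s i * pt.2 := by
    intro i pt
    simp [hψ, hev, ContinuousLinearMap.sub_apply, ContinuousLinearMap.comp_apply,
      ContinuousLinearMap.smul_apply, smul_eq_mul]
  set γ : ι → ℝ := fun i => (u i).2 + s i * r0 with hγ
  obtain ⟨Lw, hLwmem⟩ : ∃ Lw : AffineSubspace ℝ (WeakDual ℝ X × ℝ),
      ∀ pt : WeakDual ℝ X × ℝ, pt ∈ Lw ↔ ∀ w ∈ X0, pt.1 w.1 = w.2 := by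
    refine ⟨AffineSubspace.mk {pt : WeakDual ℝ X × ℝ | ∀ w ∈ X0, pt.1 w.1 = w.2} ?_,
      fun pt => Iff.rfl⟩
    intro t p1 p2 p3 h1 h2 h3 w hw
    show (t • (p1 -ᵥ p2) +ᵥ p3).1 w.1 = w.2
    have e : (t • (p1 -ᵥ p2) +ᵥ p3).1 w.1 = t * (p1.1 w.1 - p2.1 w.1) + p3.1 w.1 := rfl
    rw [e, h1 w hw, h2 w hw, h3 w hw]
    ring
  have hLwclosed : IsClosed (Lw : Set (WeakDual ℝ X × ℝ)) := by
    have : (Lw : Set (WeakDual ℝ X × ℝ)) =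
        ⋂ w ∈ X0, {pt : WeakDual ℝ X × ℝ | pt.1 w.1 = w.2} := by
      ext pt
      simp only [SetLike.mem_coe, hLwmem, Set.mem_iInter, Set.mem_setOf_eq]
    rw [this]
    exact isClosed_biInter fun w _ =>
      isClosed_eq ((WeakDual.eval_continuous w.1).comp continuous_fst) continuous_const
  refine ⟨Lw, Fintype.card ι, fun k => ψ ((Fintype.equivFin ι).symm k),
    fun k => γ ((Fintype.equivFin ι).symm k), hLwclosed, ?_⟩
  ext pt
  obtain ⟨P, t⟩ := pt
  simp only [epigraph, Set.mem_setOf_eq]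
  rw [hbridge P t]
  constructor
  · intro h
    have hTle : ∀ y ∈ epigraph f, T P y ≤ t := fun y hy => by rw [hTapp]; exact h y hy
    have hNmem : ∀ v : X × ℝ, v ∈ L.direction → (∀ k, a k v ≤ 0) → T P v ≤ 0 := by
      intro v hv hvk
      exact harch (T P) t y0 v (fun n => hTle _ (hmemE v hv hvk n))
    constructor
    · rw [hLwmem]
      intro w hw
      have h1 : T P w ≤ 0 := hNmem w hw.1 (fun k => le_of_eq (hw.2 k))
      have h2 : T P (-w) ≤ 0 := by
        refine hNmem (-w) (neg_mem hw.1) (fun k => ?_)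
        rw [map_neg, hw.2 k]
        simp
      rw [map_neg] at h2
      have h3 : T P w = 0 := le_antisymm h1 (by linarith)
      rw [hTapp] at h3
      show P w.1 = w.2
      linarith
    · intro k
      set i := (Fintype.equivFin ι).symm k with hi
      rw [hψapp]
      obtain ⟨hui, hsi, huik⟩ := hgen i
      have hkey : T P (u i) ≤ s i * (t - T P y0) := by
        rcases eq_or_lt_of_le hsi with hs0 | hs0
        · have hle0 : T P (u i) ≤ 0 := by
            refine harch (T P) t y0 (u i) (fun n => hTle _ (hmemE (u i) hui (fun k' => ?_) n))
            have h4 := huik k'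
            rw [← hs0] at h4
            simpa using h4
          rw [← hs0]
          simpa using hle0
        · have hmem : y0 + (s i)⁻¹ • u i ∈ epigraph f := by
            refine (hEmem _).2 ⟨?_, fun k' => ?_⟩
            · have := AffineSubspace.vadd_mem_of_mem_direction
                (Submodule.smul_mem _ (s i)⁻¹ hui) hy0.1
              simpa [vadd_eq_add, add_comm] using this
            · rw [map_add, map_smul, smul_eq_mul]
              have h3 : (s i)⁻¹ * a k' (u i) ≤ (s i)⁻¹ * (s i * (c k' - a k' y0)) :=
                mul_le_mul_of_nonneg_left (huik k') (inv_nonneg.2 hs0.le)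
              rw [inv_mul_cancel_left₀ hs0.ne'] at h3
              linarith [hy0.2 k']
          have h4 := hTle _ hmem
          rw [map_add, map_smul, smul_eq_mul] at h4
          have h5 : s i * ((s i)⁻¹ * T P (u i)) ≤ s i * (t - T P y0) :=
            mul_le_mul_of_nonneg_left (by linarith) hs0.le
          rwa [mul_inv_cancel_left₀ hs0.ne'] at h5
      rw [hTapp, hTapp] at hkey
      have h6 : P ((u i).1 + s i • x0) = P (u i).1 + s i * P x0 := by
        rw [map_add, map_smul, smul_eq_mul]
      rw [h6]
      have h7 : y0.1 = x0 := rfl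
      have h8 : y0.2 = r0 := rfl
      rw [h7, h8] at hkey
      have hγi : γ i = (u i).2 + s i * r0 := rfl
      rw [hγi]
      ring_nf at hkey ⊢
      linarith
  · rintro ⟨hLwm, hpsi⟩ y hy
    rw [hLwmem] at hLwm
    obtain ⟨hyL, hyk⟩ := (hEmem y).1 hy
    have hvdir : y - y0 ∈ L.direction := by
      have := AffineSubspace.vsub_mem_direction hyL hy0.1
      exact this
    have hvk : ∀ k, ((a k : (X × ℝ) →ₗ[ℝ] ℝ)) (y - y0) ≤ c k - a k y0 := by
      intro k
      have : a k (y - y0) = a k y - a k y0 := map_sub _ _ _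
      rw [show ((a k : (X × ℝ) →ₗ[ℝ] ℝ)) (y - y0) = a k (y - y0) from rfl, this]
      have := hyk k
      linarith
    obtain ⟨lam, hlam0, hlam1, hres, hresk⟩ := hdec (y - y0) hvdir hvk
    have hTres : T P (y - y0 - ∑ i, lam i • u i) = 0 := by
      have hmem0 : (y - y0 - ∑ i, lam i • u i) ∈ X0 := ⟨hres, fun k => by
        have := hresk k; exact this⟩
      have h9 := hLwm _ hmem0
      rw [hTapp, h9, sub_self]
    have hTui : ∀ i, T P (u i) ≤ s i * (t - T P y0) := by
      intro i
      have h10 := hpsi ((Fintype.equivFin ι) i)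
      rw [Equiv.symm_apply_apply, hψapp] at h10
      have h6 : P ((u i).1 + s i • x0) = P (u i).1 + s i * P x0 := by
        rw [map_add, map_smul, smul_eq_mul]
      rw [h6] at h10
      rw [hTapp, hTapp]
      have h7 : y0.1 = x0 := rfl
      have h8 : y0.2 = r0 := rfl
      rw [h7, h8]
      have hγi : γ i = (u i).2 + s i * r0 := rfl
      rw [hγi] at h10
      ring_nf at h10 ⊢
      linarith
    have hsum : T P (y - y0) = T P (y - y0 - ∑ i, lam i • u i) + ∑ i, lam i * T P (u i) := by
      rw [map_sub (T P) (y - y0) (∑ i, lam i • u i), map_sum]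
      have : ∀ i, T P (lam i • u i) = lam i * T P (u i) := fun i => by
        rw [map_smul, smul_eq_mul]
      simp only [this]
      ring
    have h5 : T P y = T P y0 + T P (y - y0) := by
      rw [← map_add]
      congr 1
      abel
    have h6 : ∑ i, lam i * T P (u i) ≤ ∑ i, lam i * (s i * (t - T P y0)) :=
      Finset.sum_le_sum fun i _ => mul_le_mul_of_nonneg_left (hTui i) (hlam0 i)
    have h7 : ∑ i, lam i * (s i * (t - T P y0)) = t - T P y0 := by
      simp only [← mul_assoc]
      rw [← Finset.sum_mul, hlam1, one_mul]
    have hfin : T P y ≤ t := by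
      rw [h5, hsum, hTres, zero_add]
      linarith
    rw [hTapp] at hfin
    exact hfin
end

section
/- Let g: X → ℝ ∪ {+∞} be a lower semicontinuous, proper, convex function, h: X → ℝ ∪ {+∞} a proper generalized polyhedral convex function, and C ⊆ X a nonempty closed convex set with (dom g) ∩ C ≠ ∅; set f = g − h. Let H be a selection of the subdifferential mapping ∂h on C ∩ dom ∂h whose range is a finite set, and let G_C be a selection of the subdifferential mapping ∂(g + δ_C)* on dom ∂(g + δ_C)*. Suppose sequences {x^k} and {ξ^k} are well-defined for all k ∈ ℕ by: x⁰ ∈ (dom g) ∩ C, ξ^k = H(x^k), x^{k+1} = G_C(ξ^k). Then there exist k̄ ∈ ℕ and p ≥ 1 such that: (a) x^{k+p} = x^k and ξ^{k+p} = ξ^k for every k ≥ k̄; (b) f(x^k) = f(x^{k̄}) for every k ≥ k̄. -/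
open Pointwise Topology

set_option linter.unusedSectionVars false

lemma EReal.exists_real {a : EReal} (h1 : a ≠ ⊤) (h2 : a ≠ ⊥) : ∃ r : ℝ, a = r := by
  induction a with
  | bot => simp at h2
  | coe r => exact ⟨r, rfl⟩
  | top => simp at h1

lemma lsc_epigraph_closed {X : Type*} [TopologicalSpace X] {g : X → EReal}
    (hg : LowerSemicontinuous g) : IsClosed (epigraph g) := by
  rw [← isOpen_compl_iff, isOpen_iff_mem_nhds]
  rintro ⟨x, t⟩ hxt
  simp only [Set.mem_compl_iff, epigraph, Set.mem_setOf_eq, not_le] at hxt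
  obtain ⟨r, hr1, hr2⟩ := EReal.exists_between_coe_real hxt
  have h1 : ∀ᶠ x' in nhds x, (r : EReal) < g x' := hg x r hr2
  have h2 : Set.Iio r ∈ nhds t := Iio_mem_nhds (EReal.coe_lt_coe_iff.1 hr1)
  rw [nhds_prod_eq]
  filter_upwards [Filter.prod_mem_prod h1 h2] with z hz
  simp only [Set.mem_compl_iff, epigraph, Set.mem_setOf_eq, not_le]
  exact lt_trans (EReal.coe_lt_coe_iff.2 hz.2) hz.1

section AuxSep

variable {X : Type*} [AddCommGroup X] [Module ℝ X] [TopologicalSpace X]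
  [IsTopologicalAddGroup X] [ContinuousSMul ℝ X] [LocallyConvexSpace ℝ X] [T2Space X]

lemma le_conjFn (φ : X → EReal) (p : X →L[ℝ] ℝ) (z : X) :
    ((p z : ℝ) : EReal) - φ z ≤ conjFn φ p := le_iSup (fun x => ((p x : ℝ) : EReal) - φ x) z

lemma sep_lemma {φ : X → EReal} (hconv : Convex ℝ (epigraph φ)) (hcl : IsClosed (epigraph φ))
    {x₀ : X} {r₀ : ℝ} (hx₀ : φ x₀ = (r₀ : ℝ)) {y : X} {t : ℝ} (hyt : (t : EReal) < φ y) :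
    ∃ (q : X →L[ℝ] ℝ) (c u : ℝ), c ≤ 0 ∧
      (∀ z : X, ∀ s : ℝ, φ z ≤ (s : EReal) → q z + s * c < u) ∧ u < q y + t * c := by
  have hnot : (y, t) ∉ epigraph φ := fun h => absurd h (not_le.2 hyt)
  obtain ⟨F, u, hF1, hF2⟩ := geometric_hahn_banach_closed_point hconv hcl hnot
  set q : X →L[ℝ] ℝ := F.comp (ContinuousLinearMap.inl ℝ X ℝ) with hq
  set c : ℝ := F (0, 1) with hc
  have hdecomp : ∀ (z : X) (s : ℝ), F (z, s) = q z + s * c := by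
    intro z s
    have h1 : (z, s) = (z, (0 : ℝ)) + s • ((0 : X), (1 : ℝ)) := by
      simp [Prod.ext_iff]
    rw [h1, map_add, map_smul, smul_eq_mul]
    rfl
  have hepi : ∀ (z : X) (s : ℝ), φ z ≤ (s : EReal) → q z + s * c < u := by
    intro z s h
    have := hF1 (z, s) h
    rwa [hdecomp] at this
  have hu : u < q y + t * c := by have := hF2; rwa [hdecomp] at this
  refine ⟨q, c, u, ?_, hepi, hu⟩
  by_contra hcpos
  push_neg at hcpos
  set s : ℝ := max r₀ ((u - q x₀) / c) with hs
  have h1 : q x₀ + s * c < u := hepi x₀ s (by rw [hx₀]; exact_mod_cast le_max_left _ _)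
  have h2 : (u - q x₀) / c ≤ s := le_max_right _ _
  have h3 : u - q x₀ ≤ s * c := (div_le_iff₀ hcpos).1 h2
  linarith

lemma conj_bound {φ : X → EReal}
    (hbot : ∀ z, φ z ≠ ⊥)
    {y : X} {t : ℝ} {q : X →L[ℝ] ℝ} {c u : ℝ} (hcneg : c < 0)
    (hepi : ∀ z : X, ∀ s : ℝ, φ z ≤ (s : EReal) → q z + s * c < u) (hu : u < q y + t * c) :
    ∃ (p : X →L[ℝ] ℝ) (u' : ℝ), conjFn φ p ≤ (u' : EReal) ∧ t < p y - u' := by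
  refine ⟨(-c)⁻¹ • q, u * (-c)⁻¹, ?_, ?_⟩
  · refine iSup_le fun z => ?_
    by_cases hz : φ z = ⊤
    · rw [hz, EReal.sub_top]; exact bot_le
    · obtain ⟨s, hs⟩ := EReal.exists_real hz (hbot z)
      have h1 : q z + s * c < u := hepi z s (le_of_eq hs)
      rw [hs, ← EReal.coe_sub, EReal.coe_le_coe_iff]
      have hc' : (0:ℝ) < -c := by linarith
      have hap : ((-c)⁻¹ • q) z = (-c)⁻¹ * q z := rfl
      rw [hap]
      have h2 : (-c)⁻¹ * (q z + s * c) ≤ (-c)⁻¹ * u :=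
        mul_le_mul_of_nonneg_left h1.le (inv_pos.2 hc').le
      have h4 : (-c)⁻¹ * (q z + s * c) = (-c)⁻¹ * q z - s := by
        field_simp [hcneg.ne]
        ring
      linarith [h2, h4]
  · have hc' : (0:ℝ) < -c := by linarith
    have hap : ((-c)⁻¹ • q) y = (-c)⁻¹ * q y := rfl
    rw [hap]
    have h2 : (-c)⁻¹ * u < (-c)⁻¹ * (q y + t * c) :=
      mul_lt_mul_of_pos_left hu (inv_pos.2 hc')
    have h4 : (-c)⁻¹ * (q y + t * c) = (-c)⁻¹ * q y - t := by
      field_simp [hcneg.ne]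
      ring
    linarith [h2, h4]

lemma FM_point {φ : X → EReal} (hconv : Convex ℝ (epigraph φ)) (hcl : IsClosed (epigraph φ))
    (hbot : ∀ z, φ z ≠ ⊥) {x₀ : X} {r₀ : ℝ} (hx₀ : φ x₀ = (r₀ : ℝ))
    {y : X} {t : ℝ} (hyt : (t : EReal) < φ y) :
    ∃ (p : X →L[ℝ] ℝ) (u' : ℝ), conjFn φ p ≤ (u' : EReal) ∧ t < p y - u' := by
  obtain ⟨pb, ub, hpb⟩ : ∃ (p : X →L[ℝ] ℝ) (u' : ℝ), conjFn φ p ≤ (u' : EReal) := by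
    have hyt₀ : ((r₀ - 1 : ℝ) : EReal) < φ x₀ := by
      rw [hx₀]; exact_mod_cast sub_one_lt r₀
    obtain ⟨q₀, c₀, u₀, hc₀le, hepi₀, hu₀⟩ := sep_lemma hconv hcl hx₀ hyt₀
    have hc₀ : c₀ < 0 := by
      rcases lt_or_eq_of_le hc₀le with h | h
      · exact h
      · exfalso
        have h1 := hepi₀ x₀ r₀ (le_of_eq hx₀)
        rw [h] at h1 hu₀
        simp only [mul_zero, add_zero] at h1 hu₀
        linarith
    obtain ⟨p, u', h1, _⟩ := conj_bound hbot hc₀ hepi₀ hu₀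
    exact ⟨p, u', h1⟩
  obtain ⟨q, c, u, hcle, hepi, hu⟩ := sep_lemma hconv hcl hx₀ hyt
  rcases lt_or_eq_of_le hcle with hc | hc
  · exact conj_bound hbot hc hepi hu
  · rw [hc] at hepi hu
    simp only [mul_zero, add_zero] at hepi hu
    obtain ⟨n, hn⟩ := exists_nat_gt ((t + 1 - (pb y - ub)) / (q y - u))
    have hqu : 0 < q y - u := by linarith
    have hn' : t + 1 - (pb y - ub) < n * (q y - u) := by
      rw [div_lt_iff₀ hqu] at hn; linarith
    refine ⟨pb + (n : ℝ) • q, ub + n * u, ?_, ?_⟩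
    · refine iSup_le fun z => ?_
      by_cases hz : φ z = ⊤
      · rw [hz, EReal.sub_top]; exact bot_le
      · obtain ⟨s, hs⟩ := EReal.exists_real hz (hbot z)
        have h1 : q z < u := hepi z s (le_of_eq hs)
        have h2 : pb z - s ≤ ub := by
          have := le_conjFn φ pb z
          rw [hs, ← EReal.coe_sub] at this
          exact_mod_cast le_trans this hpb
        have h3 : (n : ℝ) * q z ≤ n * u := by
          apply mul_le_mul_of_nonneg_left h1.le (Nat.cast_nonneg n)
        have h4 : (pb + (n : ℝ) • q) z = pb z + n * q z := by
          simp [ContinuousLinearMap.add_apply, ContinuousLinearMap.smul_apply, smul_eq_mul]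
        rw [hs, h4, ← EReal.coe_sub, EReal.coe_le_coe_iff]
        linarith
    · have h4 : (pb + (n : ℝ) • q) y = pb y + n * q y := by
        simp [ContinuousLinearMap.add_apply, ContinuousLinearMap.smul_apply, smul_eq_mul]
      rw [h4]
      have h3 : (n : ℝ) * (q y - u) = n * q y - n * u := by ring
      linarith

lemma keyA {φ : X → EReal} (hconv : Convex ℝ (epigraph φ)) (hcl : IsClosed (epigraph φ))
    (hbot : ∀ z, φ z ≠ ⊥) {x₀ : X} {r₀ : ℝ} (hx₀ : φ x₀ = (r₀ : ℝ))
    {p₀ : X →L[ℝ] ℝ} {y : X} (hy : y ∈ SubdiffStarAt (conjFn φ) p₀) :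
    ∃ b : ℝ, φ y = (b : EReal) ∧
      ∀ z, φ y - ((p₀ y : ℝ) : EReal) ≤ φ z - ((p₀ z : ℝ) : EReal) := by
  have hconjbot : ∀ p : X →L[ℝ] ℝ, conjFn φ p ≠ ⊥ := by
    intro p h
    have h1 := le_conjFn φ p x₀
    rw [hx₀, ← EReal.coe_sub, h, le_bot_iff] at h1
    exact EReal.coe_ne_bot _ h1
  have hconjtop : conjFn φ p₀ ≠ ⊤ := by
    intro h
    have h1 := hy p₀
    rw [h, EReal.sub_top, sub_self, le_bot_iff] at h1
    exact EReal.coe_ne_bot _ h1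
  obtain ⟨c, hc⟩ := EReal.exists_real hconjtop (hconjbot p₀)
  have hmain : φ y ≤ ((p₀ y - c : ℝ) : EReal) := by
    by_contra hcon
    rw [not_le] at hcon
    obtain ⟨p, u', h1, h2⟩ := FM_point hconv hcl hbot hx₀ hcon
    have hptop : conjFn φ p ≠ ⊤ := by
      intro ht
      rw [ht, top_le_iff] at h1
      exact EReal.coe_ne_top _ h1
    obtain ⟨d, hd⟩ := EReal.exists_real hptop (hconjbot p)
    have hdu : d ≤ u' := by rw [hd] at h1; exact_mod_cast h1
    have h3 := hy p
    rw [hc, hd, ← EReal.coe_sub, EReal.coe_le_coe_iff] at h3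
    linarith
  have hytop : φ y ≠ ⊤ := by
    intro h
    rw [h, top_le_iff] at hmain
    exact EReal.coe_ne_top _ hmain
  obtain ⟨b, hb⟩ := EReal.exists_real hytop (hbot y)
  have hbc : b ≤ p₀ y - c := by rw [hb] at hmain; exact_mod_cast hmain
  refine ⟨b, hb, fun z => ?_⟩
  by_cases hz : φ z = ⊤
  · rw [hz, EReal.top_sub_coe]; exact le_top
  · obtain ⟨s, hs⟩ := EReal.exists_real hz (hbot z)
    have h1 := le_conjFn φ p₀ z
    rw [hs, hc, ← EReal.coe_sub, EReal.coe_le_coe_iff] at h1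
    rw [hb, hs, ← EReal.coe_sub, ← EReal.coe_sub, EReal.coe_le_coe_iff]
    linarith

end AuxSep

/-- cyclic behavior of DCA sequences generated by selections, when `h` is
generalized polyhedral convex (so that a finite-range selection `H` of `∂h` exists). -/
theorem stmt17 {X : Type*} [AddCommGroup X] [Module ℝ X] [TopologicalSpace X]
    [IsTopologicalAddGroup X] [ContinuousSMul ℝ X] [LocallyConvexSpace ℝ X] [T2Space X]
    (g h : X → EReal)
    (hg1 : LowerSemicontinuous g) (hg2 : ProperFn g) (hg3 : ConvexFn g)
    (hh2 : ProperFn h) (hh3 : IsGPCF X h)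
    (C : Set X) (hC1 : C.Nonempty) (hC2 : IsClosed C) (hC3 : Convex ℝ C)
    (hdom : (domFn g ∩ C).Nonempty)
    -- `H` is a selection of `∂h` on `C ∩ dom ∂h` with finite range
    (H : X → (X →L[ℝ] ℝ))
    (hHsel : ∀ z ∈ C, (SubdiffAt h z).Nonempty → H z ∈ SubdiffAt h z)
    (hHdep : ∀ z w : X, SubdiffAt h z = SubdiffAt h w → H z = H w)
    (hHfin : (H '' (C ∩ {z : X | (SubdiffAt h z).Nonempty})).Finite)
    -- `G` is a selection of `∂(g + δ_C)*` on `dom ∂(g + δ_C)*`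
    (G : (X →L[ℝ] ℝ) → X)
    (hGsel : ∀ q : X →L[ℝ] ℝ,
      (SubdiffStarAt (conjFn (fun z => g z + indFn C z)) q).Nonempty →
        G q ∈ SubdiffStarAt (conjFn (fun z => g z + indFn C z)) q)
    (hGdep : ∀ q r : X →L[ℝ] ℝ,
      SubdiffStarAt (conjFn (fun z => g z + indFn C z)) q =
          SubdiffStarAt (conjFn (fun z => g z + indFn C z)) r →
        G q = G r)
    -- the DCA sequences, well-defined for all `k`
    (x : ℕ → X) (ξ : ℕ → (X →L[ℝ] ℝ))
    (hx0 : x 0 ∈ domFn g ∩ C)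
    (hxC : ∀ k : ℕ, x k ∈ C)
    (hxdom : ∀ k : ℕ, (SubdiffAt h (x k)).Nonempty)
    (hξdef : ∀ k : ℕ, ξ k = H (x k))
    (hξdom : ∀ k : ℕ,
      (SubdiffStarAt (conjFn (fun z => g z + indFn C z)) (ξ k)).Nonempty)
    (hxsucc : ∀ k : ℕ, x (k + 1) = G (ξ k)) :
    ∃ (k₀ p : ℕ), 1 ≤ p ∧
      (∀ k : ℕ, k₀ ≤ k → x (k + p) = x k ∧ ξ (k + p) = ξ k) ∧
      (∀ k : ℕ, k₀ ≤ k → dcObj g h (x k) = dcObj g h (x k₀)) := by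
  classical
  set φ : X → EReal := fun z => g z + indFn C z with hφdef
  obtain ⟨xbar, hxbarg, hxbarC⟩ := hdom
  obtain ⟨r₀, hr₀⟩ := EReal.exists_real hxbarg (hg2.2 xbar)
  have hφbot : ∀ z, φ z ≠ ⊥ := by
    intro z hbz
    rcases EReal.add_eq_bot_iff.1 hbz with hb | hb
    · exact hg2.2 z hb
    · simp only [indFn] at hb
      split_ifs at hb <;> simp_all
  have hφxbar : φ xbar = (r₀ : ℝ) := by simp [hφdef, indFn, hxbarC, hr₀]
  have hφC : ∀ z ∈ C, φ z = g z := fun z hz => by simp [hφdef, indFn, hz]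
  have hepiφ : epigraph φ = epigraph g ∩ C ×ˢ (Set.univ : Set ℝ) := by
    ext ⟨z, s⟩
    simp only [epigraph, Set.mem_setOf_eq, Set.mem_inter_iff, Set.mem_prod, Set.mem_univ,
      and_true, hφdef, indFn]
    by_cases hz : z ∈ C
    · simp [hz]
    · simp only [hz, if_false]
      rw [EReal.add_top_of_ne_bot (hg2.2 z)]
      simp [hz]
  have hcl : IsClosed (epigraph φ) := by
    rw [hepiφ]; exact (lsc_epigraph_closed hg1).inter (hC2.prod isClosed_univ)
  have hconv : Convex ℝ (epigraph φ) := by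
    rw [hepiφ]; exact hg3.inter (hC3.prod convex_univ)
  -- key property of the iterates from the conjugate subdifferential
  have hkey : ∀ k : ℕ, ∃ b : ℝ, φ (x (k+1)) = (b : EReal) ∧
      ∀ z, φ (x (k+1)) - ((ξ k (x (k+1)) : ℝ) : EReal) ≤ φ z - ((ξ k z : ℝ) : EReal) := by
    intro k
    have h1 : x (k+1) ∈ SubdiffStarAt (conjFn φ) (ξ k) := by
      rw [hxsucc k]; exact hGsel (ξ k) (hξdom k)
    exact keyA hconv hcl hφbot hφxbar h1
  have hgreal : ∀ k : ℕ, ∃ a : ℝ, g (x k) = (a : EReal) := by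
    intro k
    cases k with
    | zero => exact EReal.exists_real hx0.1 (hg2.2 _)
    | succ k =>
      obtain ⟨b, hb, _⟩ := hkey k
      rw [hφC _ (hxC (k+1))] at hb
      exact ⟨b, hb⟩
  have hhreal : ∀ k : ℕ, ∃ m : ℝ, h (x k) = (m : EReal) := by
    intro k
    obtain ⟨ζ, hζ⟩ := hxdom k
    refine EReal.exists_real ?_ (hh2.2 _)
    intro htop
    obtain ⟨z₁, hz₁⟩ := hh2.1
    obtain ⟨s₁, hs₁⟩ := EReal.exists_real hz₁ (hh2.2 z₁)
    have h2 := hζ z₁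
    rw [htop, hs₁, EReal.sub_top, le_bot_iff] at h2
    exact EReal.coe_ne_bot _ h2
  have hdcform : ∀ k : ℕ, ∀ a m : ℝ, g (x k) = (a : EReal) → h (x k) = (m : EReal) →
      dcObj g h (x k) = ((a - m : ℝ) : EReal) := by
    intro k a m ha hm
    simp only [dcObj, ha, hm]
    rw [if_neg (by simp), ← EReal.coe_sub]
  -- monotone decrease of the DC objective along the iterates
  have hdec : ∀ k : ℕ, dcObj g h (x (k+1)) ≤ dcObj g h (x k) := by
    intro k
    obtain ⟨a, ha⟩ := hgreal k
    obtain ⟨b0, hb0⟩ := hgreal (k+1)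
    obtain ⟨m, hm⟩ := hhreal k
    obtain ⟨m', hm'⟩ := hhreal (k+1)
    have hξk : ξ k ∈ SubdiffAt h (x k) := by
      rw [hξdef k]; exact hHsel _ (hxC k) (hxdom k)
    have hi := hξk (x (k+1))
    rw [hm, hm', ← EReal.coe_sub, EReal.coe_le_coe_iff] at hi
    obtain ⟨b, hb, hkz⟩ := hkey k
    have hii := hkz (x k)
    rw [hφC _ (hxC (k+1)), hφC _ (hxC k), hb0, ha, ← EReal.coe_sub, ← EReal.coe_sub,
      EReal.coe_le_coe_iff] at hii
    rw [hdcform k a m ha hm, hdcform (k+1) b0 m' hb0 hm', EReal.coe_le_coe_iff]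
    linarith
  have hanti : ∀ k l : ℕ, k ≤ l → dcObj g h (x l) ≤ dcObj g h (x k) :=
    fun _ _ hkl => antitone_nat_of_succ_le (f := fun n => dcObj g h (x n)) hdec hkl
  -- pigeonhole on the finitely many values of ξ
  have hTmem : ∀ k : ℕ, ξ k ∈ H '' (C ∩ {z : X | (SubdiffAt h z).Nonempty}) :=
    fun k => ⟨x k, ⟨hxC k, hxdom k⟩, (hξdef k).symm⟩
  haveI : Finite (H '' (C ∩ {z : X | (SubdiffAt h z).Nonempty}) : Set _) := hHfin.to_subtype
  obtain ⟨i, j, hlt, hξij⟩ : ∃ i j : ℕ, i < j ∧ ξ i = ξ j := by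
    obtain ⟨i, j, hij, hξij⟩ := Finite.exists_ne_map_eq_of_infinite
      (fun k : ℕ => (⟨ξ k, hTmem k⟩ : (H '' (C ∩ {z : X | (SubdiffAt h z).Nonempty}) : Set _)))
    have hξij' : ξ i = ξ j := congrArg Subtype.val hξij
    rcases hij.lt_or_gt with hij2 | hij2
    exacts [⟨i, j, hij2, hξij'⟩, ⟨j, i, hij2, hξij'.symm⟩]
  have hstep : ∀ k : ℕ, ξ (k+1) = H (G (ξ k)) := fun k => by rw [hξdef (k+1), hxsucc k]
  set p : ℕ := j - i with hpdef
  have hp : 1 ≤ p := by omega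
  have hξperm : ∀ m : ℕ, ξ (i + m + p) = ξ (i + m) := by
    intro m
    induction m with
    | zero =>
      have hij : i + 0 + p = j := by omega
      rw [hij]
      simpa using hξij.symm
    | succ m ih =>
      have e1 : i + (m+1) + p = (i + m + p) + 1 := by omega
      have e2 : i + (m+1) = (i + m) + 1 := by omega
      rw [e1, hstep (i + m + p), ih, e2, hstep (i + m)]
  have hξper : ∀ k : ℕ, i ≤ k → ξ (k + p) = ξ k := by
    intro k hk
    obtain ⟨m, rfl⟩ := Nat.exists_eq_add_of_le hk
    exact hξperm m
  have hxper : ∀ k : ℕ, i + 1 ≤ k → x (k + p) = x k := by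
    intro k hk
    have e1 : k + p = (k - 1 + p) + 1 := by omega
    have e2 : k - 1 + 1 = k := by omega
    rw [e1, hxsucc, hξper (k-1) (by omega), ← hxsucc, e2]
  have hxiter : ∀ n : ℕ, x (i + 1 + n * p) = x (i + 1) := by
    intro n
    induction n with
    | zero => simp
    | succ n ih =>
      have e1 : i + 1 + (n+1) * p = (i + 1 + n * p) + p := by ring
      rw [e1, hxper _ (by omega), ih]
  refine ⟨i + 1, p, hp, fun k hk => ⟨hxper k hk, hξper k (by omega)⟩, fun k hk => ?_⟩
  refine le_antisymm (hanti _ _ hk) ?_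
  have e3 : x (i + 1 + k * p) = x (i + 1) := hxiter k
  have h4 : dcObj g h (x (i + 1 + k * p)) ≤ dcObj g h (x k) := by
    apply hanti
    calc k ≤ k * p := Nat.le_mul_of_pos_right k (by omega)
    _ ≤ i + 1 + k * p := by omega
  rwa [e3] at h4
end

section
/- Let g: X → ℝ ∪ {+∞} be a proper generalized polyhedral convex function, h: X → ℝ ∪ {+∞} a lower semicontinuous, proper, convex function, and C ⊆ X a nonempty generalized polyhedral convex set with (dom g) ∩ C ≠ ∅; set f = g − h. Let H be a selection of the subdifferential mapping ∂h on C ∩ dom ∂h, and let G_C be a selection of the subdifferential mapping ∂(g + δ_C)* on dom ∂(g + δ_C)* whose range is a finite set. Suppose sequences {x^k} and {ξ^k} are well-defined for all k ∈ ℕ by: x⁰ ∈ (dom g) ∩ C, ξ^k = H(x^k), x^{k+1} = G_C(ξ^k). Then there exist k̄ ∈ ℕ and p ≥ 1 such that: (a) x^{k+p} = x^k and ξ^{k+p} = ξ^k for every k ≥ k̄; (b) f(x^k) = f(x^{k̄}) for every k ≥ k̄. -/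
open Pointwise Topology

section DCAAux

variable {Y : Type*} [AddCommGroup Y] [Module ℝ Y] [TopologicalSpace Y]

lemma isGPCS_isClosed {S : Set Y} (h : IsGPCS Y S) : IsClosed S := by
  obtain ⟨L, p, a, c, hL, rfl⟩ := h
  have : {x : Y | x ∈ L ∧ ∀ k, a k x ≤ c k}
      = (L : Set Y) ∩ ⋂ k, {x : Y | a k x ≤ c k} := by
    ext z; simp [Set.mem_iInter]
  rw [this]
  exact hL.inter (isClosed_iInter fun k => isClosed_le (a k).continuous continuous_const)

lemma isGPCS_convex {S : Set Y} (h : IsGPCS Y S) : Convex ℝ S := by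
  obtain ⟨L, p, a, c, hL, rfl⟩ := h
  have : {x : Y | x ∈ L ∧ ∀ k, a k x ≤ c k}
      = (L : Set Y) ∩ ⋂ k, {x : Y | a k x ≤ c k} := by
    ext z; simp [Set.mem_iInter]
  rw [this]
  exact L.convex.inter (convex_iInter fun k =>
    convex_halfSpace_le (a k : Y →ₗ[ℝ] ℝ).isLinear _)

variable [IsTopologicalAddGroup Y] [ContinuousSMul ℝ Y] [LocallyConvexSpace ℝ Y]

lemma sep_epi (φ : Y → EReal) (hcl : IsClosed (epigraph φ))
    (hcv : Convex ℝ (epigraph φ)) (x₁ : Y) (a₁ : ℝ) (hx₁ : φ x₁ = (a₁ : ℝ))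
    (z : Y) (m : ℝ) (hz : ¬ φ z ≤ ((m : ℝ) : EReal)) :
    ∃ (p : Y →L[ℝ] ℝ) (c u : ℝ), c ≤ 0 ∧
      (∀ w : Y, ∀ t : ℝ, φ w ≤ ((t : ℝ) : EReal) → p w + c * t < u) ∧
      u < p z + c * m := by
  have hzm : (z, m) ∉ epigraph φ := hz
  obtain ⟨f, u, hfu, huf⟩ := geometric_hahn_banach_closed_point hcv hcl hzm
  set p : Y →L[ℝ] ℝ := f.comp (ContinuousLinearMap.inl ℝ Y ℝ) with hp
  set c : ℝ := f (0, 1) with hc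
  have hdec : ∀ (w : Y) (t : ℝ), f (w, t) = p w + c * t := by
    intro w t
    have h1 : (w, t) = (w, (0:ℝ)) + t • ((0:Y), (1:ℝ)) := by
      simp [Prod.ext_iff]
    rw [h1, map_add, map_smul, smul_eq_mul]
    simp only [hp, hc, ContinuousLinearMap.comp_apply, ContinuousLinearMap.inl_apply]
    ring
  have hmem : ∀ (w : Y) (t : ℝ), φ w ≤ ((t : ℝ) : EReal) → p w + c * t < u := by
    intro w t hwt
    have h1 := hfu (w, t) hwt
    rwa [hdec] at h1
  have hcle : c ≤ 0 := by
    by_contra hcpos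
    push_neg at hcpos
    set t : ℝ := max a₁ ((u - p x₁) / c) with ht
    have h1 : φ x₁ ≤ ((t : ℝ) : EReal) := by
      rw [hx₁]; exact_mod_cast le_max_left _ _
    have h2 := hmem x₁ t h1
    have h3 : (u - p x₁) / c ≤ t := le_max_right _ _
    rw [div_le_iff₀ hcpos] at h3
    nlinarith
  refine ⟨p, c, u, hcle, hmem, ?_⟩
  have h2 := huf; rwa [hdec] at h2

lemma conj_bound_s18 (φ : Y → EReal) (hbot : ∀ z, φ z ≠ ⊥)
    (p : Y →L[ℝ] ℝ) (c u : ℝ) (hc : c < 0)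
    (h : ∀ (w : Y) (t : ℝ), φ w ≤ ((t : ℝ) : EReal) → p w + c * t < u) :
    conjFn φ ((-c)⁻¹ • p) ≤ ((u / (-c) : ℝ) : EReal) := by
  apply iSup_le
  intro w
  by_cases hw : φ w = ⊤
  · simp [hw]
  · have hwR : φ w = (((φ w).toReal : ℝ) : EReal) := (EReal.coe_toReal hw (hbot w)).symm
    set b := (φ w).toReal with hb
    have h1 : p w + c * b < u := h w b (le_of_eq hwR)
    have hd : (0:ℝ) < -c := by linarith
    have happ : ((-c)⁻¹ • p) w = (-c)⁻¹ * p w := by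
      simp
    rw [hwR, happ, ← EReal.coe_sub]
    apply EReal.coe_le_coe_iff.2
    rw [div_eq_inv_mul]
    have h2 : p w - (-c) * b ≤ u := by linarith
    calc (-c)⁻¹ * p w - b = (-c)⁻¹ * (p w - (-c) * b) := by
          rw [mul_sub, ← mul_assoc, inv_mul_cancel₀ hd.ne', one_mul]
      _ ≤ (-c)⁻¹ * u := mul_le_mul_of_nonneg_left h2 (by positivity)

lemma exists_affine_minorant (φ : Y → EReal) (hcl : IsClosed (epigraph φ))
    (hcv : Convex ℝ (epigraph φ)) (hbot : ∀ z, φ z ≠ ⊥)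
    (x₁ : Y) (a₁ : ℝ) (hx₁ : φ x₁ = (a₁ : ℝ)) :
    ∃ (p₁ : Y →L[ℝ] ℝ) (r₁ : ℝ), conjFn φ p₁ ≤ ((r₁ : ℝ) : EReal) := by
  have hz : ¬ φ x₁ ≤ (((a₁ - 1 : ℝ)) : EReal) := by
    intro hcon
    rw [hx₁] at hcon
    have := EReal.coe_le_coe_iff.1 hcon
    linarith
  obtain ⟨p, c, u, hcle, hmem, hlt⟩ := sep_epi φ hcl hcv x₁ a₁ hx₁ x₁ (a₁ - 1) hz
  have hc : c < 0 := by
    rcases hcle.lt_or_eq with h | h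
    · exact h
    · exfalso
      have h2 := hmem x₁ a₁ (le_of_eq hx₁)
      rw [h] at h2 hlt
      simp at h2 hlt
      linarith
  exact ⟨(-c)⁻¹ • p, u / (-c), conj_bound_s18 φ hbot p c u hc hmem⟩

lemma key_ineq (φ : Y → EReal) (hcl : IsClosed (epigraph φ))
    (hcv : Convex ℝ (epigraph φ)) (hbot : ∀ z, φ z ≠ ⊥)
    (x₁ : Y) (hx₁ : φ x₁ ≠ ⊤)
    (q : Y →L[ℝ] ℝ) (y : Y) (hsub : y ∈ SubdiffStarAt (conjFn φ) q) :
    ∃ r : ℝ, conjFn φ q = (r : EReal) ∧ φ y ≤ ((q y - r : ℝ) : EReal) := by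
  set a₁ := (φ x₁).toReal with ha₁
  have hx₁' : φ x₁ = (a₁ : EReal) := (EReal.coe_toReal hx₁ (hbot x₁)).symm
  have hΦbot : conjFn φ q ≠ ⊥ := by
    have h1 : ((q x₁ : ℝ) : EReal) - φ x₁ ≤ conjFn φ q :=
      le_iSup (fun z => ((q z : ℝ) : EReal) - φ z) x₁
    rw [hx₁', ← EReal.coe_sub] at h1
    intro hbot2
    rw [hbot2, le_bot_iff] at h1
    exact EReal.coe_ne_bot _ h1
  have hΦtop : conjFn φ q ≠ ⊤ := by
    intro htop
    have h1 := hsub q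
    rw [htop] at h1
    simp at h1
  set r := (conjFn φ q).toReal with hrdef
  have hΦ : conjFn φ q = (r : EReal) := (EReal.coe_toReal hΦtop hΦbot).symm
  refine ⟨r, hΦ, ?_⟩
  have hyp : ∀ p : Y →L[ℝ] ℝ, ((p y - q y + r : ℝ) : EReal) ≤ conjFn φ p := by
    intro p
    have h1 := hsub p
    rw [hΦ, EReal.le_sub_iff_add_le (Or.inl (EReal.coe_ne_bot r))
      (Or.inl (EReal.coe_ne_top r))] at h1
    rw [EReal.coe_add]
    exact h1
  by_contra hcon
  obtain ⟨p, c, u, hcle, hmem, hlt⟩ := sep_epi φ hcl hcv x₁ a₁ hx₁' y (q y - r) hcon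
  rcases hcle.lt_or_eq with hc | hc
  · have hbd := conj_bound_s18 φ hbot p c u hc hmem
    have h2 := (hyp ((-c)⁻¹ • p)).trans hbd
    have h3 : ((-c)⁻¹ • p) y - q y + r ≤ u / (-c) := EReal.coe_le_coe_iff.1 h2
    have happ : ((-c)⁻¹ • p) y = (-c)⁻¹ * p y := by simp
    rw [happ] at h3
    have hd : (0:ℝ) < -c := by linarith
    have h4 : u * (-c)⁻¹ < (p y + c * (q y - r)) * (-c)⁻¹ :=
      mul_lt_mul_of_pos_right hlt (by positivity)
    have hcne : c ≠ 0 := by linarith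
    have h5 : (p y + c * (q y - r)) * (-c)⁻¹ = (-c)⁻¹ * p y - (q y - r) := by
      field_simp
      ring
    rw [h5] at h4
    rw [div_eq_mul_inv] at h3
    linarith
  · obtain ⟨p₁, r₁, hp₁⟩ := exists_affine_minorant φ hcl hcv hbot x₁ a₁ hx₁'
    have hmem0 : ∀ (w : Y) (t : ℝ), φ w ≤ ((t : ℝ) : EReal) → p w < u := by
      intro w t hwt
      have h2 := hmem w t hwt
      rw [hc, zero_mul, add_zero] at h2
      exact h2
    have hlt0 : u < p y := by
      have := hlt; rw [hc, zero_mul, add_zero] at this; exact this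
    set ε := p y - u with hε
    have hεpos : (0:ℝ) < ε := by rw [hε]; linarith
    have hbd : ∀ lam : ℝ, 0 < lam →
        conjFn φ (p₁ + lam • p) ≤ ((r₁ + lam * u : ℝ) : EReal) := by
      intro lam hlam
      apply iSup_le
      intro w
      by_cases hw : φ w = ⊤
      · simp [hw]
      · have hwR : φ w = (((φ w).toReal : ℝ) : EReal) := (EReal.coe_toReal hw (hbot w)).symm
        set b := (φ w).toReal with hb
        have h1 : p₁ w - b ≤ r₁ := by
          have h2 : ((p₁ w : ℝ) : EReal) - φ w ≤ conjFn φ p₁ :=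
            le_iSup (fun z => ((p₁ z : ℝ) : EReal) - φ z) w
          rw [hwR, ← EReal.coe_sub] at h2
          exact EReal.coe_le_coe_iff.1 (h2.trans hp₁)
        have h3 : p w < u := hmem0 w b (le_of_eq hwR)
        have happ : (p₁ + lam • p) w = p₁ w + lam * p w := by simp
        rw [hwR, happ, ← EReal.coe_sub]
        apply EReal.coe_le_coe_iff.2
        nlinarith
    set B := r₁ - r + q y - p₁ y with hB
    set lam := (|B| + 1) / ε with hlam
    have hlampos : (0:ℝ) < lam := by positivity
    have h2 := (hyp (p₁ + lam • p)).trans (hbd lam hlampos)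
    have h3 : (p₁ + lam • p) y - q y + r ≤ r₁ + lam * u := EReal.coe_le_coe_iff.1 h2
    have happ : (p₁ + lam • p) y = p₁ y + lam * p y := by simp
    rw [happ] at h3
    have h4 : lam * ε ≤ B := by
      rw [hB, hε]
      nlinarith
    have h5 : lam * ε = |B| + 1 := by
      rw [hlam, div_mul_cancel₀ _ hεpos.ne']
    have h6 := le_abs_self B
    linarith

end DCAAux

/-- cyclic behavior of DCA sequences generated by selections, when `g` is
generalized polyhedral convex and `C` is a generalized polyhedral convex set (so that a
finite-range selection `G_C` of `∂(g + δ_C)*` exists). -/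
theorem stmt18 {X : Type*} [AddCommGroup X] [Module ℝ X] [TopologicalSpace X]
    [IsTopologicalAddGroup X] [ContinuousSMul ℝ X] [LocallyConvexSpace ℝ X] [T2Space X]
    (g h : X → EReal)
    (hg2 : ProperFn g) (hg3 : IsGPCF X g)
    (hh1 : LowerSemicontinuous h) (hh2 : ProperFn h) (hh3 : ConvexFn h)
    (C : Set X) (hC1 : C.Nonempty) (hC2 : IsGPCS X C)
    (hdom : (domFn g ∩ C).Nonempty)
    -- `H` is a selection of `∂h` on `C ∩ dom ∂h`
    (H : X → (X →L[ℝ] ℝ))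
    (hHsel : ∀ z ∈ C, (SubdiffAt h z).Nonempty → H z ∈ SubdiffAt h z)
    (hHdep : ∀ z w : X, SubdiffAt h z = SubdiffAt h w → H z = H w)
    -- `G` is a selection of `∂(g + δ_C)*` on `dom ∂(g + δ_C)*` with finite range
    (G : (X →L[ℝ] ℝ) → X)
    (hGsel : ∀ q : X →L[ℝ] ℝ,
      (SubdiffStarAt (conjFn (fun z => g z + indFn C z)) q).Nonempty →
        G q ∈ SubdiffStarAt (conjFn (fun z => g z + indFn C z)) q)
    (hGdep : ∀ q r : X →L[ℝ] ℝ,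
      SubdiffStarAt (conjFn (fun z => g z + indFn C z)) q =
          SubdiffStarAt (conjFn (fun z => g z + indFn C z)) r →
        G q = G r)
    (hGfin : (G '' {q : X →L[ℝ] ℝ |
      (SubdiffStarAt (conjFn (fun z => g z + indFn C z)) q).Nonempty}).Finite)
    -- the DCA sequences, well-defined for all `k`
    (x : ℕ → X) (ξ : ℕ → (X →L[ℝ] ℝ))
    (hx0 : x 0 ∈ domFn g ∩ C)
    (hxC : ∀ k : ℕ, x k ∈ C)
    (hxdom : ∀ k : ℕ, (SubdiffAt h (x k)).Nonempty)
    (hξdef : ∀ k : ℕ, ξ k = H (x k))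
    (hξdom : ∀ k : ℕ,
      (SubdiffStarAt (conjFn (fun z => g z + indFn C z)) (ξ k)).Nonempty)
    (hxsucc : ∀ k : ℕ, x (k + 1) = G (ξ k)) :
    ∃ (k₀ p : ℕ), 1 ≤ p ∧
      (∀ k : ℕ, k₀ ≤ k → x (k + p) = x k ∧ ξ (k + p) = ξ k) ∧
      (∀ k : ℕ, k₀ ≤ k → dcObj g h (x k) = dcObj g h (x k₀)) := by
  classical
  set φ : X → EReal := fun z => g z + indFn C z with hφdef
  have hgbot : ∀ z, g z ≠ ⊥ := hg2.2
  have hindbot : ∀ z, indFn C z ≠ ⊥ := by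
    intro z; unfold indFn; split <;> simp
  have hφC : ∀ z ∈ C, φ z = g z := by
    intro z hz; simp [hφdef, indFn, hz]
  have hφbot : ∀ z, φ z ≠ ⊥ := by
    intro z hcon
    rcases EReal.add_eq_bot_iff.1 hcon with h1 | h1
    · exact hgbot z h1
    · exact hindbot z h1
  have hepi : epigraph φ = epigraph g ∩ (C ×ˢ (Set.univ : Set ℝ)) := by
    ext ⟨z, t⟩
    simp only [epigraph, Set.mem_setOf_eq, Set.mem_inter_iff, Set.mem_prod,
      Set.mem_univ, and_true]
    by_cases hz : z ∈ C
    · simp [hφdef, indFn, hz]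
    · simp only [hφdef, indFn, hz, if_neg, ite_false]
      rw [EReal.add_top_of_ne_bot (hgbot z)]
      simp [top_le_iff, hz]
  have hgepi : IsGPCS (X × ℝ) (epigraph g) := hg3
  have hepicl : IsClosed (epigraph φ) := by
    rw [hepi]
    exact (isGPCS_isClosed hgepi).inter ((isGPCS_isClosed hC2).prod isClosed_univ)
  have hepicv : Convex ℝ (epigraph φ) := by
    rw [hepi]
    exact (isGPCS_convex hgepi).inter ((isGPCS_convex hC2).prod convex_univ)
  obtain ⟨x₁, hx₁g, hx₁C⟩ := hdom
  have hx₁ : φ x₁ ≠ ⊤ := by rw [hφC x₁ hx₁C]; exact hx₁g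
  -- key inequality at every step
  have hkey : ∀ k : ℕ, ∃ r : ℝ, conjFn φ (ξ k) = (r : EReal) ∧
      φ (x (k+1)) ≤ ((ξ k (x (k+1)) - r : ℝ) : EReal) := by
    intro k
    have hy : x (k+1) ∈ SubdiffStarAt (conjFn φ) (ξ k) := by
      rw [hxsucc k]; exact hGsel _ (hξdom k)
    exact key_ineq φ hepicl hepicv hφbot x₁ hx₁ (ξ k) _ hy
  -- g is finite along the sequence
  have hgtop : ∀ k : ℕ, g (x k) ≠ ⊤ := by
    intro k
    cases k with
    | zero => exact hx0.1
    | succ n =>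
      obtain ⟨r, _, hle⟩ := hkey n
      rw [hφC _ (hxC (n+1))] at hle
      intro htop
      rw [htop, top_le_iff] at hle
      exact EReal.coe_ne_top _ hle
  -- h is finite along the sequence
  have hhfin : ∀ k : ℕ, h (x k) ≠ ⊤ ∧ h (x k) ≠ ⊥ := by
    intro k
    refine ⟨?_, hh2.2 _⟩
    obtain ⟨pp, hpp⟩ := hxdom k
    have h1 := hpp (x k)
    simp only [sub_self, EReal.coe_zero] at h1
    intro htop
    rw [htop] at h1
    simp at h1
  set A : ℕ → ℝ := fun k => (g (x k)).toReal with hAdef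
  set B : ℕ → ℝ := fun k => (h (x k)).toReal with hBdef
  have hA : ∀ k, g (x k) = ((A k : ℝ) : EReal) :=
    fun k => (EReal.coe_toReal (hgtop k) (hgbot _)).symm
  have hB : ∀ k, h (x k) = ((B k : ℝ) : EReal) :=
    fun k => (EReal.coe_toReal (hhfin k).1 (hhfin k).2).symm
  have hF : ∀ k, dcObj g h (x k) = ((A k - B k : ℝ) : EReal) := by
    intro k
    unfold dcObj
    rw [if_neg (fun hcc => hgtop k hcc.1), hA k, hB k, ← EReal.coe_sub]
  -- descent
  have hdesc : ∀ k, A (k+1) - B (k+1) ≤ A k - B k := by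
    intro k
    obtain ⟨r, hr, hle⟩ := hkey k
    have hf2 : A (k+1) ≤ ξ k (x (k+1)) - r := by
      rw [hφC _ (hxC (k+1)), hA (k+1)] at hle
      exact EReal.coe_le_coe_iff.1 hle
    have hf3 : ξ k (x k) - A k ≤ r := by
      have h2 : ((ξ k (x k) : ℝ) : EReal) - φ (x k) ≤ conjFn φ (ξ k) :=
        le_iSup (fun z => ((ξ k z : ℝ) : EReal) - φ z) (x k)
      rw [hφC _ (hxC k), hA k, ← EReal.coe_sub, hr] at h2
      exact EReal.coe_le_coe_iff.1 h2
    have hf1 : ξ k (x (k+1)) - ξ k (x k) ≤ B (k+1) - B k := by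
      have hH := hHsel (x k) (hxC k) (hxdom k)
      rw [← hξdef k] at hH
      have h2 := hH (x (k+1))
      rw [hB (k+1), hB k, ← EReal.coe_sub] at h2
      exact EReal.coe_le_coe_iff.1 h2
    linarith
  have hFle : ∀ k, dcObj g h (x (k+1)) ≤ dcObj g h (x k) := by
    intro k
    rw [hF (k+1), hF k]
    exact EReal.coe_le_coe_iff.2 (hdesc k)
  have hanti : Antitone (fun k => dcObj g h (x k)) := antitone_nat_of_succ_le hFle
  -- pigeonhole: the sequence repeats
  have hmaps : ∀ k : ℕ, x (k+1) ∈ G '' {q : X →L[ℝ] ℝ |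
      (SubdiffStarAt (conjFn φ) q).Nonempty} :=
    fun k => ⟨ξ k, hξdom k, (hxsucc k).symm⟩
  obtain ⟨a, -, b, -, hab, heq0⟩ :=
    Set.Infinite.exists_ne_map_eq_of_mapsTo (Set.infinite_univ (α := ℕ))
      (fun k _ => hmaps k) hGfin
  obtain ⟨a, b, hlt, heq⟩ : ∃ a b : ℕ, a < b ∧ x (a+1) = x (b+1) := by
    rcases hab.lt_or_gt with h1 | h1
    · exact ⟨a, b, h1, heq0⟩
    · exact ⟨b, a, h1, heq0.symm⟩
  have hstep : ∀ m n : ℕ, x m = x n → x (m+1) = x (n+1) := by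
    intro m n he
    rw [hxsucc m, hxsucc n, hξdef m, hξdef n, he]
  have hshift : ∀ d : ℕ, x (a+1+d) = x (b+1+d) := by
    intro d
    induction d with
    | zero => exact heq
    | succ n ih => exact hstep _ _ ih
  have hper : ∀ k, a+1 ≤ k → x (k + (b-a)) = x k := by
    intro k hk
    obtain ⟨d, rfl⟩ : ∃ d, k = a+1+d := ⟨k - (a+1), by omega⟩
    have h1 := hshift d
    have h2 : a+1+d + (b-a) = b+1+d := by omega
    rw [h2]
    exact h1.symm
  refine ⟨a+1, b-a, by omega, ?_, ?_⟩
  · intro k hk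
    refine ⟨hper k hk, ?_⟩
    rw [hξdef, hξdef, hper k hk]
  · intro k hk
    have hperiter : ∀ m : ℕ, x (a+1 + m * (b-a)) = x (a+1) := by
      intro m
      induction m with
      | zero => simp
      | succ n ih =>
        have h1 : a+1 + (n+1)*(b-a) = (a+1 + n*(b-a)) + (b-a) := by ring
        rw [h1, hper _ (by omega), ih]
    have h1 : dcObj g h (x k) ≤ dcObj g h (x (a+1)) := hanti hk
    have h2 : dcObj g h (x (a+1)) ≤ dcObj g h (x k) := by
      have h3 := hperiter k
      have hba : 1 ≤ b - a := by omega
      have h4 : k ≤ a+1+k*(b-a) := by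
        have h5 : k * 1 ≤ k * (b-a) := Nat.mul_le_mul_left k hba
        omega
      calc dcObj g h (x (a+1)) = dcObj g h (x (a+1+k*(b-a))) := by rw [h3]
        _ ≤ dcObj g h (x k) := hanti h4
    exact le_antisymm h1 h2
end
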